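/- Let P be a wulpo that is a box-augmentation of connected wulpos Q₁, …, Qₙ. Then rank(P) ≤ rank(Q₁) ⊗ ⋯ ⊗ rank(Qₙ), where ⊗ is the natural (Hessenberg) product of ordinals. -/

import Mathlib

universe u

namespace Ordinal

/-- Natural (Hessenberg) addition of ordinals, as in Mathlib's former `Ordinal.nadd`. -/
noncomputable def nadd (a b : Ordinal.{u}) : Ordinal.{u} :=
  max (⨆ x : Set.Iio a, Order.succ (nadd x.1 b)) (⨆ x : Set.Iio b, Order.succ (nadd a x.1))
termination_by (a, b)
decreasing_by all_goals cases x; decreasing_tactic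

/-- Natural (Hessenberg) multiplication of ordinals, as in Mathlib's former `Ordinal.nmul`. -/
noncomputable def nmul (a b : Ordinal.{u}) : Ordinal.{u} :=
  sInf {c | ∀ a' < a, ∀ b' < b,
    nadd (nmul a' b) (nmul a b') < nadd c (nmul a' b')}
termination_by (a, b)

end Ordinal

infixl:70 " ⨳ " => Ordinal.nmul

/-- A partial order is upwards linear if for every `p` the set `{x | p < x}` is linearly
ordered. -/
def UpwardsLinear (P : Type u) [PartialOrder P] : Prop :=
  ∀ p x y : P, p < x → p < y → x ≤ y ∨ y ≤ x

/-- A partial order is connected if its comparability graph is connected. -/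
def ConnectedOrder (P : Type u) [PartialOrder P] : Prop :=
  ∀ x y : P, Relation.ReflTransGen (fun a b : P => a ≤ b ∨ b ≤ a) x y

/-- `η` witnesses that `A` is a box-augmentation of the family `B`. -/
def IsBoxAugmentation {n : ℕ} (A : Type u) [PartialOrder A] (B : Fin n → Type u)
    [∀ i, PartialOrder (B i)] (η : (∀ i, B i) ≃ A) : Prop :=
  ∀ (k : Fin n) (d : ∀ i, B i) (e e' : B k),
    e ≤ e' ↔ η (Function.update d k e) ≤ η (Function.update d k e')

/-- The ordinal rank of an element of a well-founded partial order. -/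
noncomputable def elRank {P : Type u} [PartialOrder P] [WellFoundedLT P] (p : P) :
    Ordinal.{u} :=
  IsWellFounded.rank (α := P) (· < ·) p

/-- The ordinal rank of a well-founded partial order. -/
noncomputable def ordRank (P : Type u) [PartialOrder P] [WellFoundedLT P] : Ordinal.{u} :=
  ⨆ p : P, elRank p + 1

infixl:65 " ♯ " => Ordinal.nadd

namespace Ordinal

open Order

protected theorem zero_le (a : Ordinal.{u}) : 0 ≤ a := _root_.zero_le

theorem nadd_def (a b : Ordinal.{u}) : a ♯ b =
    max (⨆ x : Set.Iio a, succ (x.1 ♯ b)) (⨆ x : Set.Iio b, succ (a ♯ x.1)) := by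
  rw [nadd]

theorem lt_nadd_iff {a b c : Ordinal.{u}} :
    a < b ♯ c ↔ (∃ b' < b, a ≤ b' ♯ c) ∨ ∃ c' < c, a ≤ b ♯ c' := by
  rw [nadd_def, lt_max_iff, Ordinal.lt_iSup_iff, Ordinal.lt_iSup_iff]
  simp only [Order.lt_succ_iff, Subtype.exists, Set.mem_Iio, exists_prop]

theorem nadd_le_iff {a b c : Ordinal.{u}} :
    b ♯ c ≤ a ↔ (∀ b' < b, b' ♯ c < a) ∧ ∀ c' < c, b ♯ c' < a := by
  rw [nadd_def, max_le_iff, Ordinal.iSup_le_iff, Ordinal.iSup_le_iff]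
  simp only [Order.succ_le_iff, Subtype.forall, Set.mem_Iio]

theorem nadd_lt_nadd_left {b c : Ordinal.{u}} (h : b < c) (a : Ordinal.{u}) : a ♯ b < a ♯ c :=
  lt_nadd_iff.2 (Or.inr ⟨b, h, le_rfl⟩)

theorem nadd_lt_nadd_right {b c : Ordinal.{u}} (h : b < c) (a : Ordinal.{u}) : b ♯ a < c ♯ a :=
  lt_nadd_iff.2 (Or.inl ⟨b, h, le_rfl⟩)

theorem nadd_le_nadd_left {b c : Ordinal.{u}} (h : b ≤ c) (a : Ordinal.{u}) : a ♯ b ≤ a ♯ c := by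
  rcases h.lt_or_eq with h | rfl
  · exact (nadd_lt_nadd_left h a).le
  · exact le_rfl

theorem nadd_le_nadd_right {b c : Ordinal.{u}} (h : b ≤ c) (a : Ordinal.{u}) : b ♯ a ≤ c ♯ a := by
  rcases h.lt_or_eq with h | rfl
  · exact (nadd_lt_nadd_right h a).le
  · exact le_rfl

theorem nadd_le_nadd {a b c d : Ordinal.{u}} (h1 : a ≤ b) (h2 : c ≤ d) : a ♯ c ≤ b ♯ d :=
  (nadd_le_nadd_left h2 a).trans (nadd_le_nadd_right h1 d)

theorem nadd_lt_nadd_of_lt_of_le {a b c d : Ordinal.{u}} (h1 : a < b) (h2 : c ≤ d) :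
    a ♯ c < b ♯ d :=
  (nadd_le_nadd_left h2 a).trans_lt (nadd_lt_nadd_right h1 d)

theorem nadd_lt_nadd_of_le_of_lt {a b c d : Ordinal.{u}} (h1 : a ≤ b) (h2 : c < d) :
    a ♯ c < b ♯ d :=
  (nadd_lt_nadd_left h2 a).trans_le (nadd_le_nadd_right h1 d)

theorem lt_of_nadd_lt_nadd_right {a b c : Ordinal.{u}} (h : a ♯ c < b ♯ c) : a < b :=
  lt_of_not_ge fun h' => absurd h (not_lt_of_ge (nadd_le_nadd_right h' c))

theorem le_self_nadd {a b : Ordinal.{u}} : a ≤ a ♯ b := by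
  induction a using Ordinal.induction with
  | _ a IH =>
  refine le_of_forall_lt fun c hc => ?_
  exact (IH c hc).trans_lt (nadd_lt_nadd_right hc b)

@[simp] theorem nadd_zero (a : Ordinal.{u}) : a ♯ 0 = a := by
  induction a using Ordinal.induction with
  | _ a IH =>
  refine le_antisymm (nadd_le_iff.2 ⟨fun b hb => ?_, fun c hc => ?_⟩) le_self_nadd
  · rw [IH b hb]; exact hb
  · exact absurd hc (not_lt_of_ge (Ordinal.zero_le c))

theorem nadd_comm (a b : Ordinal.{u}) : a ♯ b = b ♯ a := by
  induction a using Ordinal.induction generalizing b with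
  | _ a IHa =>
  induction b using Ordinal.induction with
  | _ b IHb =>
  rw [nadd_def, nadd_def b a, max_comm]
  refine congrArg₂ max (iSup_congr fun x => ?_) (iSup_congr fun x => ?_)
  · rw [IHb x.1 x.2]
  · rw [IHa x.1 x.2]

@[simp] theorem zero_nadd (a : Ordinal.{u}) : 0 ♯ a = a := by
  rw [nadd_comm, nadd_zero]

theorem le_nadd_self {a b : Ordinal.{u}} : a ≤ b ♯ a := by
  rw [nadd_comm]; exact le_self_nadd

theorem nadd_succ (a b : Ordinal.{u}) : a ♯ succ b = succ (a ♯ b) := by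
  induction a using Ordinal.induction with
  | _ a IH =>
  refine le_antisymm (nadd_le_iff.2 ⟨fun a' ha' => ?_, fun c hc => ?_⟩)
    (succ_le_of_lt (nadd_lt_nadd_left (lt_succ b) a))
  · rw [IH a' ha', succ_lt_succ_iff]; exact nadd_lt_nadd_right ha' b
  · exact lt_succ_of_le (nadd_le_nadd_left (le_of_lt_succ hc) a)

theorem succ_nadd (a b : Ordinal.{u}) : succ a ♯ b = succ (a ♯ b) := by
  rw [nadd_comm, nadd_succ, nadd_comm]

theorem add_le_nadd (a b : Ordinal.{u}) : a + b ≤ a ♯ b := by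
  induction b using Ordinal.induction with
  | _ b IH =>
  refine le_of_forall_lt fun c hc => ?_
  rcases lt_or_ge c a with h | h
  · exact h.trans_le le_self_nadd
  · obtain ⟨d, rfl⟩ : ∃ d, c = a + d := ⟨c - a, (Ordinal.add_sub_cancel_of_le h).symm⟩
    have hd : d < b := (add_lt_add_iff_left a).1 hc
    exact (IH d hd).trans_lt (nadd_lt_nadd_left hd a)

theorem nadd_assoc (a b c : Ordinal.{u}) : a ♯ b ♯ c = a ♯ (b ♯ c) := by
  induction a using Ordinal.induction generalizing b c with
  | _ a IHa =>
  induction b using Ordinal.induction generalizing c with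
  | _ b IHb =>
  induction c using Ordinal.induction with
  | _ c IHc =>
  refine le_antisymm (nadd_le_iff.2 ⟨fun x hx => ?_, fun c' hc => ?_⟩)
    (nadd_le_iff.2 ⟨fun a' ha => ?_, fun y hy => ?_⟩)
  · rcases lt_nadd_iff.1 hx with ⟨a', ha, hx⟩ | ⟨b', hb, hx⟩
    · calc x ♯ c ≤ a' ♯ b ♯ c := nadd_le_nadd_right hx c
        _ = a' ♯ (b ♯ c) := IHa a' ha b c
        _ < a ♯ (b ♯ c) := nadd_lt_nadd_right ha _
    · calc x ♯ c ≤ a ♯ b' ♯ c := nadd_le_nadd_right hx c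
        _ = a ♯ (b' ♯ c) := IHb b' hb c
        _ < a ♯ (b ♯ c) := nadd_lt_nadd_left (nadd_lt_nadd_right hb c) a
  · rw [IHc c' hc]; exact nadd_lt_nadd_left (nadd_lt_nadd_left hc b) a
  · rw [← IHa a' ha b c]; exact nadd_lt_nadd_right (nadd_lt_nadd_right ha b) c
  · rcases lt_nadd_iff.1 hy with ⟨b', hb, hy⟩ | ⟨c', hc, hy⟩
    · calc a ♯ y ≤ a ♯ (b' ♯ c) := nadd_le_nadd_left hy a
        _ = a ♯ b' ♯ c := (IHb b' hb c).symm
        _ < a ♯ b ♯ c := nadd_lt_nadd_right (nadd_lt_nadd_left hb a) c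
    · calc a ♯ y ≤ a ♯ (b ♯ c') := nadd_le_nadd_left hy a
        _ = a ♯ b ♯ c' := (IHc c' hc).symm
        _ < a ♯ b ♯ c := nadd_lt_nadd_left hc _

instance nadd_isAssoc : Std.Associative Ordinal.nadd.{u} := ⟨nadd_assoc⟩

instance nadd_isComm : Std.Commutative Ordinal.nadd.{u} := ⟨nadd_comm⟩

theorem nmul_def (a b : Ordinal.{u}) : a ⨳ b =
    sInf {c | ∀ a' < a, ∀ b' < b, a' ⨳ b ♯ a ⨳ b' < c ♯ a' ⨳ b'} := by
  rw [nmul]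

theorem nmul_nonempty (a b : Ordinal.{u}) :
    {c : Ordinal.{u} | ∀ a' < a, ∀ b' < b, a' ⨳ b ♯ a ⨳ b' < c ♯ a' ⨳ b'}.Nonempty := by
  refine ⟨⨆ x : Set.Iio a × Set.Iio b, succ (x.1.1 ⨳ b ♯ a ⨳ x.2.1), fun a' ha b' hb => ?_⟩
  have := Ordinal.le_iSup (fun x : Set.Iio a × Set.Iio b => succ (x.1.1 ⨳ b ♯ a ⨳ x.2.1))
    (⟨a', ha⟩, ⟨b', hb⟩)
  exact (Order.lt_succ _).trans_le (this.trans le_self_nadd)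

theorem nmul_nadd_lt {a' b' a b : Ordinal.{u}} (ha : a' < a) (hb : b' < b) :
    a' ⨳ b ♯ a ⨳ b' < a ⨳ b ♯ a' ⨳ b' := by
  have h := csInf_mem (nmul_nonempty a b)
  rw [← nmul_def a b] at h
  exact h a' ha b' hb

theorem nmul_nadd_le {a' b' a b : Ordinal.{u}} (ha : a' ≤ a) (hb : b' ≤ b) :
    a' ⨳ b ♯ a ⨳ b' ≤ a ⨳ b ♯ a' ⨳ b' := by
  rcases ha.lt_or_eq with ha | rfl
  · rcases hb.lt_or_eq with hb | rfl
    · exact (nmul_nadd_lt ha hb).le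
    · exact (nadd_comm _ _).le
  · exact le_rfl

theorem nmul_le_iff {a b c : Ordinal.{u}} :
    a ⨳ b ≤ c ↔ ∀ a' < a, ∀ b' < b, a' ⨳ b ♯ a ⨳ b' < c ♯ a' ⨳ b' := by
  constructor
  · intro h a' ha b' hb
    exact (nmul_nadd_lt ha hb).trans_le (nadd_le_nadd_right h _)
  · intro h
    rw [nmul_def a b]
    exact csInf_le' h

theorem lt_nmul_iff {a b c : Ordinal.{u}} :
    c < a ⨳ b ↔ ∃ a' < a, ∃ b' < b, c ♯ a' ⨳ b' ≤ a' ⨳ b ♯ a ⨳ b' := by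
  constructor
  · intro h
    by_contra hne
    push_neg at hne
    exact absurd h (not_lt_of_ge (nmul_le_iff.2 hne))
  · rintro ⟨a', ha, b', hb, h⟩
    exact lt_of_nadd_lt_nadd_right (h.trans_lt (nmul_nadd_lt ha hb))

theorem nmul_comm (a b : Ordinal.{u}) : a ⨳ b = b ⨳ a := by
  induction a using Ordinal.induction generalizing b with
  | _ a IHa =>
  induction b using Ordinal.induction with
  | _ b IHb =>
  refine le_antisymm (nmul_le_iff.2 fun a' ha b' hb => ?_) (nmul_le_iff.2 fun b' hb a' ha => ?_)
  · rw [IHa a' ha b, IHb b' hb, IHa a' ha b', nadd_comm]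
    exact nmul_nadd_lt hb ha
  · rw [← IHa a' ha b, ← IHb b' hb, ← IHa a' ha b', nadd_comm]
    exact nmul_nadd_lt ha hb

@[simp] theorem nmul_zero (a : Ordinal.{u}) : a ⨳ 0 = 0 :=
  le_antisymm (nmul_le_iff.2 fun _ _ b' hb => absurd hb (not_lt_of_ge (Ordinal.zero_le b'))) (Ordinal.zero_le _)

@[simp] theorem zero_nmul (a : Ordinal.{u}) : 0 ⨳ a = 0 := by
  rw [nmul_comm, nmul_zero]

@[simp] theorem nmul_one (a : Ordinal.{u}) : a ⨳ 1 = a := by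
  induction a using Ordinal.induction with
  | _ a IH =>
  refine le_antisymm (nmul_le_iff.2 fun a' ha b' hb => ?_) (le_of_forall_lt fun c hc => ?_)
  · rw [Ordinal.lt_one_iff_zero] at hb
    subst hb
    simpa [IH a' ha] using ha
  · exact lt_nmul_iff.2 ⟨c, hc, 0, zero_lt_one, by simp [IH c hc]⟩

@[simp] theorem one_nmul (a : Ordinal.{u}) : 1 ⨳ a = a := by
  rw [nmul_comm, nmul_one]

theorem nmul_lt_nmul_of_pos_left {a b c : Ordinal.{u}} (h : a < b) (hc : 0 < c) :
    c ⨳ a < c ⨳ b :=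
  lt_nmul_iff.2 ⟨0, hc, a, h, by simp⟩

theorem nmul_lt_nmul_of_pos_right {a b c : Ordinal.{u}} (h : a < b) (hc : 0 < c) :
    a ⨳ c < b ⨳ c :=
  lt_nmul_iff.2 ⟨a, h, 0, hc, by simp⟩

theorem nmul_le_nmul_left {a b : Ordinal.{u}} (h : a ≤ b) (c : Ordinal.{u}) : c ⨳ a ≤ c ⨳ b := by
  rcases h.lt_or_eq with h | rfl
  · rcases eq_or_ne c 0 with rfl | hc
    · simp
    · exact (nmul_lt_nmul_of_pos_left h (pos_iff_ne_zero.2 hc)).le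
  · exact le_rfl

theorem nmul_le_nmul_right {a b : Ordinal.{u}} (h : a ≤ b) (c : Ordinal.{u}) : a ⨳ c ≤ b ⨳ c := by
  rw [nmul_comm a c, nmul_comm b c]
  exact nmul_le_nmul_left h c

theorem nmul_nadd (a b c : Ordinal.{u}) : a ⨳ (b ♯ c) = a ⨳ b ♯ a ⨳ c := by
  induction a using Ordinal.induction generalizing b c with
  | _ a IHa =>
  induction b using Ordinal.induction generalizing c with
  | _ b IHb =>
  induction c using Ordinal.induction with
  | _ c IHc =>
  refine le_antisymm (nmul_le_iff.2 fun a' ha d hd => ?_)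
    (nadd_le_iff.2 ⟨fun x hx => ?_, fun y hy => ?_⟩)
  · rw [IHa a' ha b c]
    rcases lt_nadd_iff.1 hd with ⟨b', hb, hd⟩ | ⟨c', hc, hd⟩
    · have X := nadd_lt_nadd_of_lt_of_le (nmul_nadd_lt ha hb) (nmul_nadd_le ha.le hd)
      rw [IHa a' ha b' c, IHb b' hb c] at X
      apply lt_of_nadd_lt_nadd_right (c := a ⨳ b' ♯ a' ⨳ b')
      convert X using 1 <;> ac_rfl
    · have X := nadd_lt_nadd_of_lt_of_le (nmul_nadd_lt ha hc) (nmul_nadd_le ha.le hd)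
      rw [IHa a' ha b c', IHc c' hc] at X
      apply lt_of_nadd_lt_nadd_right (c := a ⨳ c' ♯ a' ⨳ c')
      convert X using 1 <;> ac_rfl
  · obtain ⟨a', ha, b', hb, h⟩ := lt_nmul_iff.1 hx
    refine lt_nmul_iff.2 ⟨a', ha, b' ♯ c, nadd_lt_nadd_right hb c, ?_⟩
    rw [IHa a' ha b' c, IHa a' ha b c, IHb b' hb c]
    have := nadd_le_nadd_right h (a ⨳ c ♯ a' ⨳ c)
    convert this using 1 <;> ac_rfl
  · obtain ⟨a', ha, c', hc, h⟩ := lt_nmul_iff.1 hy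
    refine lt_nmul_iff.2 ⟨a', ha, b ♯ c', nadd_lt_nadd_left hc b, ?_⟩
    rw [IHa a' ha b c', IHa a' ha b c, IHc c' hc]
    have := nadd_le_nadd_right h (a ⨳ b ♯ a' ⨳ b)
    convert this using 1 <;> ac_rfl

theorem nadd_nmul (a b c : Ordinal.{u}) : (a ♯ b) ⨳ c = a ⨳ c ♯ b ⨳ c := by
  rw [nmul_comm, nmul_nadd, nmul_comm c a, nmul_comm c b]

end Ordinal

open Ordinal Order
open scoped Classical


namespace BoxAux

/-- Workhorse: `(ω^h * j + a) ♯ b ≤ ω^h * j + (a ♯ b)` when `a < ω^h`, `b < ω^h * ω`. -/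
theorem nadd_powmul_add (h : Ordinal)
    (P3h : ∀ x y : Ordinal, x < ω ^ h → y < ω ^ h → x ♯ y < ω ^ h) :
    ∀ κ b j a : Ordinal, b / ω ^ h ≤ κ → b < ω ^ h * ω → a < ω ^ h →
      (ω ^ h * j + a) ♯ b ≤ ω ^ h * j + (a ♯ b) := by
  have hπ0 : (0:Ordinal) < ω ^ h := opow_pos h omega0_pos
  intro κ
  induction κ using Ordinal.induction with
  | _ κ IHκ =>
  intro b
  induction b using Ordinal.induction with
  | _ b IHb =>
  intro j
  induction j using Ordinal.induction with
  | _ j IHj =>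
  intro a
  induction a using Ordinal.induction with
  | _ a IHa =>
  intro hbκ hb ha
  have key : ∀ w, w < ω ^ h → w ♯ b < ω ^ h + b := by
    intro w hw
    by_cases hbπ : b < ω ^ h
    · exact (P3h w b hw hbπ).trans_le (le_self_add)
    · push_neg at hbπ
      have hk1 : 1 ≤ b / ω ^ h := (le_div hπ0.ne').2 (by simpa using hbπ)
      have hκ0 : 0 < κ := (lt_of_lt_of_le zero_lt_one hk1).trans_le hbκ
      have hw0 : w / ω ^ h ≤ 0 := by
        have : w / ω ^ h < 1 := (div_lt hπ0.ne').2 (by simpa using hw)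
        exact le_of_lt_succ (by simpa using this)
      obtain ⟨n, hn⟩ := lt_omega0.1 ((div_lt hπ0.ne').2 hb)
      have hS := IHκ 0 hκ0 w (b / ω ^ h) (b % ω ^ h) hw0
        (hw.trans_le (Ordinal.le_mul_left _ omega0_pos)) (mod_lt b hπ0.ne')
      calc w ♯ b = (ω ^ h * (b / ω ^ h) + b % ω ^ h) ♯ w := by
            rw [div_add_mod, nadd_comm]
        _ ≤ ω ^ h * (b / ω ^ h) + (b % ω ^ h ♯ w) := hS
        _ < ω ^ h * (b / ω ^ h) + ω ^ h :=
            add_lt_add_right (P3h _ _ (mod_lt b hπ0.ne') hw) _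
        _ = ω ^ h * (b / ω ^ h + 1) := by rw [mul_add, mul_one]
        _ ≤ ω ^ h + b := by
            conv_rhs => rw [← div_add_mod b (ω ^ h)]
            rw [← add_assoc, ← mul_one_add]
            calc ω ^ h * (b / ω ^ h + 1) = ω ^ h * (1 + b / ω ^ h) := by
                  rw [hn, ← Nat.cast_one, ← Nat.cast_add, ← Nat.cast_add, Nat.add_comm]
              _ ≤ ω ^ h * (1 + b / ω ^ h) + b % ω ^ h := le_self_add
  rw [nadd_le_iff]
  constructor
  · intro w hw
    by_cases hwc : ω ^ h * j ≤ w
    · obtain ⟨a', rfl⟩ : ∃ a', w = ω ^ h * j + a' :=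
        ⟨w - ω ^ h * j, (Ordinal.add_sub_cancel_of_le hwc).symm⟩
      have ha' : a' < a := by rwa [add_lt_add_iff_left] at hw
      calc (ω ^ h * j + a') ♯ b ≤ ω ^ h * j + (a' ♯ b) :=
            IHa a' ha' hbκ hb (ha'.trans ha)
        _ < ω ^ h * j + (a ♯ b) := add_lt_add_right (nadd_lt_nadd_right ha' b) _
    · push_neg at hwc
      have hj₁ : w / ω ^ h < j := (div_lt hπ0.ne').2 hwc
      have hw₀ : w % ω ^ h < ω ^ h := mod_lt w hπ0.ne'
      have hS := IHj (w / ω ^ h) hj₁ (w % ω ^ h) hbκ hb hw₀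
      calc w ♯ b = (ω ^ h * (w / ω ^ h) + w % ω ^ h) ♯ b := by rw [div_add_mod]
        _ ≤ ω ^ h * (w / ω ^ h) + (w % ω ^ h ♯ b) := hS
        _ < ω ^ h * (w / ω ^ h) + (ω ^ h + b) := add_lt_add_right (key _ hw₀) _
        _ = ω ^ h * (w / ω ^ h + 1) + b := by rw [← add_assoc, mul_add, mul_one]
        _ ≤ ω ^ h * j + b := add_le_add_left
            (mul_le_mul_right (add_one_le_of_lt hj₁) _) _
        _ ≤ ω ^ h * j + (a ♯ b) := add_le_add_right le_nadd_self _
  · intro b' hb'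
    calc (ω ^ h * j + a) ♯ b' ≤ ω ^ h * j + (a ♯ b') :=
          IHb b' hb' j a ((div_le_left hb'.le _).trans hbκ) (hb'.trans hb) ha
      _ < ω ^ h * j + (a ♯ b) := add_lt_add_right (nadd_lt_nadd_left hb' a) _

end BoxAux

namespace BoxAux

/-- ω-powers are closed under natural addition. -/
theorem nadd_lt_opow : ∀ g x y : Ordinal, x < ω ^ g → y < ω ^ g → x ♯ y < ω ^ g := by
  intro g
  induction g using Ordinal.induction with
  | _ g IH =>
  intro x y hx hy
  rcases eq_or_ne x 0 with rfl | hx0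
  · simpa using hy
  rcases eq_or_ne y 0 with rfl | hy0
  · simpa using hx
  set e := max (log ω x) (log ω y) with he
  have hπ0 : (0:Ordinal) < ω ^ e := opow_pos e omega0_pos
  have hxe : x < ω ^ e * ω := by
    calc x < ω ^ succ (log ω x) := lt_opow_succ_log_self one_lt_omega0 x
      _ ≤ ω ^ succ e := opow_le_opow_right omega0_pos (succ_le_succ (le_max_left _ _))
      _ = ω ^ e * ω := by rw [← add_one_eq_succ, opow_add, opow_one]
  have hye : y < ω ^ e * ω := by
    calc y < ω ^ succ (log ω y) := lt_opow_succ_log_self one_lt_omega0 y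
      _ ≤ ω ^ succ e := opow_le_opow_right omega0_pos (succ_le_succ (le_max_right _ _))
      _ = ω ^ e * ω := by rw [← add_one_eq_succ, opow_add, opow_one]
  have heg : e < g := by
    rw [he, max_lt_iff]
    exact ⟨(lt_opow_iff_log_lt one_lt_omega0 hx0).1 hx,
      (lt_opow_iff_log_lt one_lt_omega0 hy0).1 hy⟩
  have hsub : ω ^ e * ω ≤ ω ^ g := by
    calc ω ^ e * ω = ω ^ succ e := (opow_succ ω e).symm
      _ ≤ ω ^ g := opow_le_opow_right omega0_pos (succ_le_of_lt heg)
  have P3e := IH e heg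
  -- decompose x
  have hsmall : ∀ w, w < ω ^ e → w ♯ y < ω ^ e + y := by
    intro w hw
    by_cases hyπ : y < ω ^ e
    · exact (P3e w y hw hyπ).trans_le (le_self_add)
    · push_neg at hyπ
      have hw0 : w / ω ^ e ≤ 0 := by
        have : w / ω ^ e < 1 := (div_lt hπ0.ne').2 (by simpa using hw)
        exact le_of_lt_succ (by simpa using this)
      obtain ⟨k, hk⟩ := lt_omega0.1 ((div_lt hπ0.ne').2 hye)
      calc w ♯ y = (ω ^ e * (y / ω ^ e) + y % ω ^ e) ♯ w := by rw [div_add_mod, nadd_comm]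
        _ ≤ ω ^ e * (y / ω ^ e) + (y % ω ^ e ♯ w) :=
            nadd_powmul_add e P3e 0 w (y / ω ^ e) (y % ω ^ e) hw0
              (hw.trans_le (Ordinal.le_mul_left _ omega0_pos)) (mod_lt y hπ0.ne')
        _ < ω ^ e * (y / ω ^ e) + ω ^ e := add_lt_add_right (P3e _ _ (mod_lt y hπ0.ne') hw) _
        _ = ω ^ e * (y / ω ^ e + 1) := by rw [mul_add, mul_one]
        _ ≤ ω ^ e + y := by
            conv_rhs => rw [← div_add_mod y (ω ^ e)]
            rw [← add_assoc, ← mul_one_add]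
            calc ω ^ e * (y / ω ^ e + 1) = ω ^ e * (1 + y / ω ^ e) := by
                  rw [hk, ← Nat.cast_one, ← Nat.cast_add, ← Nat.cast_add, Nat.add_comm]
              _ ≤ ω ^ e * (1 + y / ω ^ e) + y % ω ^ e := le_self_add
  obtain ⟨m, hm⟩ := lt_omega0.1 ((div_lt hπ0.ne').2 hxe)
  obtain ⟨k, hk⟩ := lt_omega0.1 ((div_lt hπ0.ne').2 hye)
  have hyk : y < ω ^ e * (k + 1) := by
    conv_lhs => rw [← div_add_mod y (ω ^ e)]
    rw [mul_add, mul_one, hk]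
    exact add_lt_add_right (mod_lt y hπ0.ne') _
  have : x ♯ y < ω ^ e * ((m + 1) + (k + 1) : ℕ) := by
    calc x ♯ y = (ω ^ e * (x / ω ^ e) + x % ω ^ e) ♯ y := by rw [div_add_mod]
      _ ≤ ω ^ e * (x / ω ^ e) + (x % ω ^ e ♯ y) :=
          nadd_powmul_add e P3e (y / ω ^ e) y (x / ω ^ e) (x % ω ^ e) le_rfl hye
            (mod_lt x hπ0.ne')
      _ < ω ^ e * (x / ω ^ e) + (ω ^ e + y) := add_lt_add_right (hsmall _ (mod_lt x hπ0.ne')) _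
      _ < ω ^ e * (x / ω ^ e) + (ω ^ e + ω ^ e * (k + 1)) := by
          exact add_lt_add_right (add_lt_add_right hyk _) _
      _ = ω ^ e * ((m + 1) + (k + 1) : ℕ) := by
          rw [hm, ← add_assoc, ← mul_add_one, ← mul_add]
          congr 1
          push_cast
          ring
  exact lt_of_lt_of_le (this.trans ((mul_lt_mul_iff_right₀ hπ0).2 (nat_lt_omega0 _))) hsub

/-- `ω^e ♯ ρ = ω^e + ρ` for `ρ < ω^(e+1)`. -/
theorem nadd_opow_eq_add {e ρ : Ordinal} (hρ : ρ < ω ^ e * ω) : ω ^ e ♯ ρ = ω ^ e + ρ := by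
  refine le_antisymm ?_ (add_le_nadd _ _)
  have h := nadd_powmul_add e (nadd_lt_opow e) (ρ / ω ^ e) ρ 1 0 le_rfl hρ
    (opow_pos e omega0_pos)
  simpa [mul_one] using h

/-- `ω^γ*n ♯ ω^γ = ω^γ*(n+1)`. -/
theorem powmul_nadd (γ : Ordinal) (n : ℕ) : ω ^ γ * n ♯ ω ^ γ = ω ^ γ * (n + 1) := by
  have hπ0 : (0:Ordinal) < ω ^ γ := opow_pos γ omega0_pos
  have hlt : ω ^ γ < ω ^ γ * ω := by
    calc ω ^ γ = ω ^ γ * 1 := (mul_one _).symm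
      _ < ω ^ γ * ω := (mul_lt_mul_iff_right₀ hπ0).2 one_lt_omega0
  refine le_antisymm ?_ ?_
  · have h := nadd_powmul_add γ (nadd_lt_opow γ) 1 (ω ^ γ) n 0 (by simp [div_self hπ0.ne'])
      hlt hπ0
    calc ω ^ γ * n ♯ ω ^ γ = (ω ^ γ * n + 0) ♯ ω ^ γ := by rw [add_zero]
      _ ≤ ω ^ γ * n + (0 ♯ ω ^ γ) := h
      _ = ω ^ γ * (n + 1) := by rw [zero_nadd, mul_add, mul_one]
  · calc ω ^ γ * (n + 1) = ω ^ γ * n + ω ^ γ := by rw [mul_add, mul_one]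
      _ ≤ ω ^ γ * n ♯ ω ^ γ := add_le_nadd _ _

end BoxAux

namespace BoxAux

theorem collect {α' b : Ordinal} (h : ω ^ α' ⨳ ω ^ b = ω ^ (α' ♯ b)) :
    ∀ n : ℕ, (ω ^ α' * n) ⨳ ω ^ b = ω ^ (α' ♯ b) * n := by
  intro n
  induction n with
  | zero => simp
  | succ n IH =>
    have h1 : (ω ^ α' * (n+1) : Ordinal) = ω ^ α' * n ♯ ω ^ α' := by
      rw [powmul_nadd]
    have h2 : (ω ^ (α' ♯ b) * (n+1) : Ordinal) = ω ^ (α' ♯ b) * n ♯ ω ^ (α' ♯ b) := by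
      rw [powmul_nadd]
    push_cast
    rw [h1, nadd_nmul, IH, h, h2]

theorem nmul_opow_omega0 : ∀ γ a b : Ordinal, a ♯ b = γ → ω ^ a ⨳ ω ^ b = ω ^ (a ♯ b) := by
  intro γ
  induction γ using Ordinal.induction with
  | _ γ IHγ =>
  intro a b hγ
  have Qgen : ∀ a' b' : Ordinal, a' ♯ b' < γ → ω ^ a' ⨳ ω ^ b' = ω ^ (a' ♯ b') :=
    fun a' b' h => IHγ _ h a' b' rfl
  have Q : ∀ x, x < ω ^ a → x ⨳ ω ^ b < ω ^ (a ♯ b) := by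
    intro x hx
    rcases eq_or_ne x 0 with rfl | hx0
    · simpa using opow_pos (a ♯ b) omega0_pos
    have hα' : log ω x < a := (lt_opow_iff_log_lt one_lt_omega0 hx0).1 hx
    have hπ0 : (0:Ordinal) < ω ^ log ω x := opow_pos _ omega0_pos
    have hx1 : x < ω ^ log ω x * ω := by
      calc x < ω ^ succ (log ω x) := lt_opow_succ_log_self one_lt_omega0 x
        _ = ω ^ log ω x * ω := opow_succ ω _
    obtain ⟨m, hm⟩ := lt_omega0.1 ((div_lt hπ0.ne').2 hx1)
    have hxle : x ≤ ω ^ log ω x * (m+1) := by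
      conv_lhs => rw [← div_add_mod x (ω ^ log ω x)]
      rw [mul_add, mul_one, hm]
      exact le_of_lt (add_lt_add_right (mod_lt x hπ0.ne') _)
    have hIH : ω ^ log ω x ⨳ ω ^ b = ω ^ (log ω x ♯ b) :=
      Qgen _ _ (by rw [← hγ]; exact nadd_lt_nadd_right hα' b)
    calc x ⨳ ω ^ b ≤ (ω ^ log ω x * (m+1)) ⨳ ω ^ b := by
          have := nmul_le_nmul_right (a := x) (b := ω ^ log ω x * (m+1)) (by exact_mod_cast hxle) (ω ^ b)
          simpa using this
      _ = ω ^ (log ω x ♯ b) * (m+1) := by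
          have := collect hIH (m+1); push_cast at this ⊢; exact this
      _ < ω ^ (log ω x ♯ b) * ω := (mul_lt_mul_iff_right₀ (opow_pos _ omega0_pos)).2
          (nat_lt_omega0 (m+1))
      _ = ω ^ succ (log ω x ♯ b) := (opow_succ ω _).symm
      _ ≤ ω ^ (a ♯ b) := opow_le_opow_right omega0_pos
          (succ_le_of_lt (nadd_lt_nadd_right hα' b))
  have Q' : ∀ y, y < ω ^ b → ω ^ a ⨳ y < ω ^ (a ♯ b) := by
    intro y hy
    rcases eq_or_ne y 0 with rfl | hy0
    · simpa using opow_pos (a ♯ b) omega0_pos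
    have hβ' : log ω y < b := (lt_opow_iff_log_lt one_lt_omega0 hy0).1 hy
    have hπ0 : (0:Ordinal) < ω ^ log ω y := opow_pos _ omega0_pos
    have hy1 : y < ω ^ log ω y * ω := by
      calc y < ω ^ succ (log ω y) := lt_opow_succ_log_self one_lt_omega0 y
        _ = ω ^ log ω y * ω := opow_succ ω _
    obtain ⟨m, hm⟩ := lt_omega0.1 ((div_lt hπ0.ne').2 hy1)
    have hyle : y ≤ ω ^ log ω y * (m+1) := by
      conv_lhs => rw [← div_add_mod y (ω ^ log ω y)]
      rw [mul_add, mul_one, hm]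
      exact le_of_lt (add_lt_add_right (mod_lt y hπ0.ne') _)
    have hIH : ω ^ log ω y ⨳ ω ^ a = ω ^ (log ω y ♯ a) :=
      Qgen _ _ (by rw [← hγ, nadd_comm a b]; exact nadd_lt_nadd_right hβ' a)
    calc ω ^ a ⨳ y = y ⨳ ω ^ a := nmul_comm _ _
      _ ≤ (ω ^ log ω y * (m+1)) ⨳ ω ^ a := by
          have := nmul_le_nmul_right (a := y) (b := ω ^ log ω y * (m+1)) (by exact_mod_cast hyle) (ω ^ a)
          simpa using this
      _ = ω ^ (log ω y ♯ a) * (m+1) := by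
          have := collect hIH (m+1); push_cast at this ⊢; exact this
      _ < ω ^ (log ω y ♯ a) * ω := (mul_lt_mul_iff_right₀ (opow_pos _ omega0_pos)).2
          (nat_lt_omega0 (m+1))
      _ = ω ^ succ (log ω y ♯ a) := (opow_succ ω _).symm
      _ ≤ ω ^ (a ♯ b) := opow_le_opow_right omega0_pos
          (by rw [nadd_comm a b]; exact succ_le_of_lt (nadd_lt_nadd_right hβ' a))
  refine le_antisymm ?_ ?_
  · rw [nmul_le_iff]
    intro x hx y hy
    exact lt_of_lt_of_le (nadd_lt_opow (a ♯ b) _ _ (Q x hx) (Q' y hy)) (le_self_nadd)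
  · refine le_of_forall_lt fun z hz => ?_
    rcases eq_or_ne z 0 with rfl | hz0
    · have h2 := nmul_le_nmul_right (a := (1:Ordinal)) (b := ω ^ a)
        (one_le_iff_pos.2 (opow_pos a omega0_pos)) 1
      have h3 := nmul_le_nmul_left (a := (1:Ordinal)) (b := ω ^ b)
        (one_le_iff_pos.2 (opow_pos b omega0_pos)) (ω ^ a)
      have h1 : (1:Ordinal) ≤ ω ^ a ⨳ ω ^ b := by
        calc (1:Ordinal) = 1 ⨳ 1 := (nmul_one 1).symm
          _ ≤ ω ^ a ⨳ 1 := h2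
          _ ≤ ω ^ a ⨳ ω ^ b := h3
      exact lt_of_lt_of_le zero_lt_one h1
    have hL : log ω z < a ♯ b := (lt_opow_iff_log_lt one_lt_omega0 hz0).1 hz
    have hπ0 : (0:Ordinal) < ω ^ log ω z := opow_pos _ omega0_pos
    have hz1 : z < ω ^ log ω z * ω := by
      calc z < ω ^ succ (log ω z) := lt_opow_succ_log_self one_lt_omega0 z
        _ = ω ^ log ω z * ω := opow_succ ω _
    obtain ⟨m, hm⟩ := lt_omega0.1 ((div_lt hπ0.ne').2 hz1)
    have hzn : z < ω ^ log ω z * (m+1) := by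
      conv_lhs => rw [← div_add_mod z (ω ^ log ω z)]
      rw [mul_add, mul_one, hm]
      exact add_lt_add_right (mod_lt z hπ0.ne') _
    rcases lt_nadd_iff.1 hL with ⟨a', ha', hle⟩ | ⟨b', hb', hle⟩
    · have hIH : ω ^ a' ⨳ ω ^ b = ω ^ (a' ♯ b) :=
        Qgen _ _ (by rw [← hγ]; exact nadd_lt_nadd_right ha' b)
      have h1 : (ω ^ a' * ((m+1:ℕ):Ordinal)) ≤ ω ^ a := le_of_lt <| by
        calc ω ^ a' * ((m+1 : ℕ) : Ordinal) < ω ^ a' * ω :=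
            (mul_lt_mul_iff_right₀ (opow_pos _ omega0_pos)).2 (nat_lt_omega0 _)
          _ = ω ^ succ a' := (opow_succ ω _).symm
          _ ≤ ω ^ a := opow_le_opow_right omega0_pos (succ_le_of_lt ha')
      calc z < ω ^ log ω z * (m+1) := hzn
        _ ≤ ω ^ (a' ♯ b) * (m+1) := by
            refine mul_le_mul_left (opow_le_opow_right omega0_pos hle) _
        _ = (ω ^ a' * (m+1)) ⨳ ω ^ b := by
            have := collect hIH (m+1); push_cast at this ⊢; exact this.symm
        _ ≤ ω ^ a ⨳ ω ^ b := by
            have := nmul_le_nmul_right (a := ω ^ a' * ((m+1:ℕ):Ordinal)) (b := ω ^ a) (by exact_mod_cast h1) (ω ^ b)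
            simpa using this
    · have hIH : ω ^ b' ⨳ ω ^ a = ω ^ (b' ♯ a) :=
        Qgen _ _ (by rw [← hγ, nadd_comm a b]; exact nadd_lt_nadd_right hb' a)
      have h1 : (ω ^ b' * ((m+1:ℕ):Ordinal)) ≤ ω ^ b := le_of_lt <| by
        calc ω ^ b' * ((m+1 : ℕ) : Ordinal) < ω ^ b' * ω :=
            (mul_lt_mul_iff_right₀ (opow_pos _ omega0_pos)).2 (nat_lt_omega0 _)
          _ = ω ^ succ b' := (opow_succ ω _).symm
          _ ≤ ω ^ b := opow_le_opow_right omega0_pos (succ_le_of_lt hb')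
      calc z < ω ^ log ω z * (m+1) := hzn
        _ ≤ ω ^ (b' ♯ a) * (m+1) := by
            refine mul_le_mul_left (opow_le_opow_right omega0_pos ?_) _
            rwa [nadd_comm b' a]
        _ = (ω ^ b' * (m+1)) ⨳ ω ^ a := by
            have := collect hIH (m+1); push_cast at this ⊢; exact this.symm
        _ ≤ ω ^ b ⨳ ω ^ a := by
            have := nmul_le_nmul_right (a := ω ^ b' * ((m+1:ℕ):Ordinal)) (b := ω ^ b) (by exact_mod_cast h1) (ω ^ a)
            simpa using this
        _ = ω ^ a ⨳ ω ^ b := nmul_comm _ _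

theorem opow_nmul_opow (a b : Ordinal) : ω ^ a ⨳ ω ^ b = ω ^ (a ♯ b) :=
  nmul_opow_omega0 (a ♯ b) a b rfl

end BoxAux


namespace BoxAux

variable {X : Type u} [PartialOrder X] [WellFoundedLT X]

theorem elRank_lt_of_lt {q p : X} (h : q < p) : elRank q < elRank p :=
  IsWellFounded.rank_lt_of_rel h

theorem elRank_le {p : X} {c : Ordinal} (h : ∀ q, q < p → elRank q < c) : elRank p ≤ c := by
  rw [elRank, IsWellFounded.rank_eq]
  refine Ordinal.iSup_le ?_
  rintro ⟨q, hq⟩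
  exact succ_le_of_lt (h q hq)

theorem elRank_add_one_le_ordRank (p : X) : elRank p + 1 ≤ ordRank X :=
  Ordinal.le_iSup (fun p : X => elRank p + 1) p

theorem ordRank_le {c : Ordinal} (h : ∀ p : X, elRank p + 1 ≤ c) : ordRank X ≤ c :=
  Ordinal.iSup_le h

/-- rank inside a subposet given by a set. -/
noncomputable def srank (S : Set X) : Ordinal.{u} := ordRank ↥S

theorem subtype_elRank_le_ordRank {S : Set X} (x : ↥S) : elRank x + 1 ≤ srank S :=
  elRank_add_one_le_ordRank x

theorem srank_le {S : Set X} {c : Ordinal} (h : ∀ x : ↥S, elRank x + 1 ≤ c) : srank S ≤ c :=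
  ordRank_le h

theorem elRank_mono_subset {S T : Set X} (hST : S ⊆ T) :
    ∀ x (hx : x ∈ S), elRank (⟨x, hx⟩ : ↥S) ≤ elRank (⟨x, hST hx⟩ : ↥T) := by
  intro x
  induction x using WellFoundedLT.induction with
  | _ x IH =>
  intro hx
  refine elRank_le ?_
  rintro ⟨q, hq⟩ hlt
  rw [Subtype.mk_lt_mk] at hlt
  exact lt_of_le_of_lt (IH q hlt hq) (elRank_lt_of_lt (by exact hlt))

theorem srank_mono {S T : Set X} (hST : S ⊆ T) : srank S ≤ srank T := by
  refine srank_le ?_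
  rintro ⟨x, hx⟩
  calc elRank (⟨x, hx⟩ : ↥S) + 1 ≤ elRank (⟨x, hST hx⟩ : ↥T) + 1 := by
        exact add_le_add_left (elRank_mono_subset hST x hx) 1
    _ ≤ srank T := subtype_elRank_le_ordRank _

theorem elRank_subtype_le {S : Set X} : ∀ x (hx : x ∈ S), elRank (⟨x, hx⟩ : ↥S) ≤ elRank x := by
  intro x
  induction x using WellFoundedLT.induction with
  | _ x IH =>
  intro hx
  refine elRank_le ?_
  rintro ⟨q, hq⟩ hlt
  rw [Subtype.mk_lt_mk] at hlt
  exact lt_of_le_of_lt (IH q hlt hq) (elRank_lt_of_lt hlt)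

/-- If `S` is downward closed within `T`, ranks agree. -/
theorem elRank_eq_of_downclosed {S T : Set X} (hST : S ⊆ T)
    (hdc : ∀ y ∈ S, ∀ z ∈ T, z < y → z ∈ S) :
    ∀ x (hx : x ∈ S), elRank (⟨x, hST hx⟩ : ↥T) = elRank (⟨x, hx⟩ : ↥S) := by
  intro x
  induction x using WellFoundedLT.induction with
  | _ x IH =>
  intro hx
  refine le_antisymm ?_ (elRank_mono_subset hST x hx)
  refine elRank_le ?_
  rintro ⟨q, hq⟩ hlt
  rw [Subtype.mk_lt_mk] at hlt
  have hqS : q ∈ S := hdc x hx q hq hlt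
  calc elRank (⟨q, hq⟩ : ↥T) = elRank (⟨q, hqS⟩ : ↥S) := IH q hlt hqS
    _ < elRank (⟨x, hx⟩ : ↥S) := elRank_lt_of_lt (by exact hlt)

theorem srank_lt_subset {S : Set X} {x : X} (hx : x ∈ S) :
    srank (S ∩ {y | y < x}) ≤ elRank (⟨x, hx⟩ : ↥S) := by
  refine srank_le ?_
  rintro ⟨y, hyS, hyx⟩
  have h1 : elRank (⟨y, ⟨hyS, hyx⟩⟩ : ↥(S ∩ {y | y < x})) ≤ elRank (⟨y, hyS⟩ : ↥S) :=
    elRank_mono_subset Set.inter_subset_left y ⟨hyS, hyx⟩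
  have h2 : elRank (⟨y, hyS⟩ : ↥S) < elRank (⟨x, hx⟩ : ↥S) := elRank_lt_of_lt (by exact hyx)
  calc _ ≤ elRank (⟨y, hyS⟩ : ↥S) + 1 := add_le_add_left h1 1
    _ ≤ elRank (⟨x, hx⟩ : ↥S) := succ_le_of_lt (by simpa [add_one_eq_succ] using h2)

/-- For a downward closed set, subtype rank agrees with ambient rank. -/
theorem elRank_eq_of_downclosed' {S : Set X} (hdc : ∀ y ∈ S, ∀ z, z < y → z ∈ S) :
    ∀ x (hx : x ∈ S), elRank (⟨x, hx⟩ : ↥S) = elRank x := by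
  intro x
  induction x using WellFoundedLT.induction with
  | _ x IH =>
  intro hx
  refine le_antisymm (elRank_subtype_le x hx) (elRank_le ?_)
  intro q hq
  have hqS : q ∈ S := hdc x hx q hq
  calc elRank q = elRank (⟨q, hqS⟩ : ↥S) := (IH q hq hqS).symm
    _ < elRank (⟨x, hx⟩ : ↥S) := elRank_lt_of_lt (by exact hq)

theorem ordRank_eq_srank_univ : ordRank X = srank (Set.univ : Set X) := by
  refine le_antisymm (ordRank_le ?_) (srank_le ?_)
  · intro p
    rw [← elRank_eq_of_downclosed' (S := Set.univ) (by intro y _ z _; trivial) p trivial]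
    exact subtype_elRank_le_ordRank _
  · rintro ⟨x, hx⟩
    rw [elRank_eq_of_downclosed' (S := Set.univ) (by intro y _ z _; trivial) x hx]
    exact elRank_add_one_le_ordRank x

theorem elRank_eq_srank_lt (p : X) : elRank p = srank {q | q < p} := by
  refine le_antisymm ?_ ?_
  · refine elRank_le ?_
    intro q hq
    have hdc : ∀ y ∈ {q | q < p}, ∀ z, z < y → z ∈ {q | q < p} :=
      fun y hy z hzy => lt_trans hzy hy
    calc elRank q = elRank (⟨q, hq⟩ : ↥{q | q < p}) := (elRank_eq_of_downclosed' hdc q hq).symm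
      _ < elRank (⟨q, hq⟩ : ↥{q | q < p}) + 1 := lt_add_one _
      _ ≤ srank {q | q < p} := subtype_elRank_le_ordRank _
  · refine srank_le ?_
    rintro ⟨q, hq⟩
    calc elRank (⟨q, hq⟩ : ↥{q | q < p}) + 1 ≤ elRank q + 1 :=
          add_le_add_left (elRank_subtype_le q hq) 1
      _ ≤ elRank p := succ_le_of_lt (by simpa [add_one_eq_succ] using elRank_lt_of_lt hq)

end BoxAux

namespace BoxAux
variable {X : Type u} [PartialOrder X] [WellFoundedLT X]

/-- Union bound: `srank (A ∪ B) ≤ srank A ♯ srank B`. -/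
theorem srank_union_le (A B : Set X) : srank (A ∪ B) ≤ srank A ♯ srank B := by
  classical
  set φ : Set X → X → Ordinal := fun S p => srank (S ∩ {q | q < p}) with hφ
  have hφ_mono : ∀ (S : Set X) {q p : X}, q ≤ p → φ S q ≤ φ S p := by
    intro S q p hqp
    exact srank_mono (by intro z hz; exact ⟨hz.1, lt_of_lt_of_le hz.2 hqp⟩)
  have hφ_le : ∀ (S : Set X) (p : X) (hp : p ∈ S), φ S p ≤ elRank (⟨p, hp⟩ : ↥S) :=
    fun S p hp => srank_lt_subset hp
  have hφ_strict : ∀ (S : Set X) {q p : X}, q ∈ S → q < p → φ S q < φ S p := by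
    intro S q p hq hqp
    have hset : S ∩ {z | z < q} = (S ∩ {z | z < p}) ∩ {z | z < q} := by
      ext z
      constructor
      · rintro ⟨h1, h2⟩; exact ⟨⟨h1, lt_trans h2 hqp⟩, h2⟩
      · rintro ⟨⟨h1, _⟩, h2⟩; exact ⟨h1, h2⟩
    have hq' : q ∈ S ∩ {z | z < p} := ⟨hq, hqp⟩
    calc φ S q = srank ((S ∩ {z | z < p}) ∩ {z | z < q}) := by
          show srank (S ∩ {z | z < q}) = _
          rw [hset]
      _ ≤ elRank (⟨q, hq'⟩ : ↥(S ∩ {z | z < p})) := srank_lt_subset hq'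
      _ < elRank (⟨q, hq'⟩ : ↥(S ∩ {z | z < p})) + 1 := lt_add_one _
      _ ≤ φ S p := subtype_elRank_le_ordRank _
  have claim : ∀ p (hp : p ∈ A ∪ B), elRank (⟨p, hp⟩ : ↥(A ∪ B)) ≤ φ A p ♯ φ B p := by
    intro p
    induction p using WellFoundedLT.induction with
    | _ p IH =>
    intro hp
    refine elRank_le ?_
    rintro ⟨q, hq⟩ hlt
    rw [Subtype.mk_lt_mk] at hlt
    have h1 := IH q hlt hq
    rcases hq with hqA | hqB
    · calc elRank (⟨q, Or.inl hqA⟩ : ↥(A ∪ B)) ≤ φ A q ♯ φ B q := IH q hlt _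
        _ < φ A p ♯ φ B p :=
          nadd_lt_nadd_of_lt_of_le (hφ_strict A hqA hlt) (hφ_mono B hlt.le)
    · calc elRank (⟨q, Or.inr hqB⟩ : ↥(A ∪ B)) ≤ φ A q ♯ φ B q := IH q hlt _
        _ < φ A p ♯ φ B p :=
          nadd_lt_nadd_of_le_of_lt (hφ_mono A hlt.le) (hφ_strict B hqB hlt)
  refine srank_le ?_
  rintro ⟨p, hp⟩
  have h2 : φ A p ≤ srank A := srank_mono Set.inter_subset_left
  have h3 : φ B p ≤ srank B := srank_mono Set.inter_subset_left
  have h4 := claim p hp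
  rcases hp with hpA | hpB
  · have h5 : φ A p + 1 ≤ srank A := by
      calc φ A p + 1 ≤ elRank (⟨p, hpA⟩ : ↥A) + 1 := add_le_add_left (hφ_le A p hpA) 1
        _ ≤ srank A := subtype_elRank_le_ordRank _
    calc elRank (⟨p, Or.inl hpA⟩ : ↥(A ∪ B)) + 1 ≤ (φ A p ♯ φ B p) + 1 :=
          add_le_add_left h4 1
      _ = (φ A p + 1) ♯ φ B p := by
          rw [add_one_eq_succ, add_one_eq_succ, ← succ_nadd]
      _ ≤ srank A ♯ srank B := nadd_le_nadd h5 h3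
  · have h5 : φ B p + 1 ≤ srank B := by
      calc φ B p + 1 ≤ elRank (⟨p, hpB⟩ : ↥B) + 1 := add_le_add_left (hφ_le B p hpB) 1
        _ ≤ srank B := subtype_elRank_le_ordRank _
    calc elRank (⟨p, Or.inr hpB⟩ : ↥(A ∪ B)) + 1 ≤ (φ A p ♯ φ B p) + 1 :=
          add_le_add_left h4 1
      _ = φ A p ♯ (φ B p + 1) := by
          rw [add_one_eq_succ, add_one_eq_succ, ← nadd_succ]
      _ ≤ srank A ♯ srank B := nadd_le_nadd h2 h5

/-- Cover by pairwise "comparability-closed" subsets: rank is the sup. -/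
theorem srank_cover_le {T : Set X} {ι : Sort*} (F : ι → Set X) (c : Ordinal)
    (hsub : ∀ i, F i ⊆ T)
    (hcover : ∀ p ∈ T, ∃ i, p ∈ F i)
    (hclosed : ∀ i, ∀ p ∈ F i, ∀ q ∈ T, (q ≤ p ∨ p ≤ q) → q ∈ F i)
    (hle : ∀ i, srank (F i) ≤ c) : srank T ≤ c := by
  refine srank_le ?_
  rintro ⟨p, hp⟩
  obtain ⟨i, hpi⟩ := hcover p hp
  have hdc : ∀ y ∈ F i, ∀ z ∈ T, z < y → z ∈ F i := by
    intro y hy z hz hlt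
    exact hclosed i y hy z hz (Or.inl hlt.le)
  calc elRank (⟨p, hp⟩ : ↥T) + 1 = elRank (⟨p, hpi⟩ : ↥(F i)) + 1 := by
        rw [elRank_eq_of_downclosed (hsub i) hdc p hpi]
    _ ≤ srank (F i) := subtype_elRank_le_ordRank _
    _ ≤ c := hle i

end BoxAux

namespace BoxAux

/-- A connected upwards linear order is upward directed. -/
theorem directed_of_connected {X : Type u} [PartialOrder X] (hUL : UpwardsLinear X)
    (hC : ConnectedOrder X) (x y : X) : ∃ z, x ≤ z ∧ y ≤ z := by
  have h := hC x y
  induction h with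
  | refl => exact ⟨x, le_rfl, le_rfl⟩
  | tail hab hbc IH =>
    rename_i b c
    obtain ⟨z, hxz, hbz⟩ := IH
    rcases hbc with hbc | hcb
    · rcases eq_or_lt_of_le hbz with rfl | hbz'
      · exact ⟨c, hxz.trans hbc, le_rfl⟩
      · rcases eq_or_lt_of_le hbc with rfl | hbc'
        · exact ⟨z, hxz, hbz⟩
        · rcases hUL b z c hbz' hbc' with h1 | h1
          · exact ⟨c, hxz.trans h1, le_rfl⟩
          · exact ⟨z, hxz, h1⟩
    · exact ⟨z, hxz, hcb.trans hbz⟩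

section Box

variable {n : ℕ} {P : Type u} [PartialOrder P]
  {Q : Fin n → Type u} [∀ i, PartialOrder (Q i)]
  {η : (∀ i, Q i) ≃ P}

theorem eta_mono (hbox : IsBoxAugmentation P Q η) :
    ∀ c d : ∀ i, Q i, (∀ i, c i ≤ d i) → η c ≤ η d := by
  classical
  have aux : ∀ s : Finset (Fin n), ∀ c d : ∀ i, Q i, (∀ i, c i ≤ d i) →
      (∀ i, i ∉ s → c i = d i) → η c ≤ η d := by
    intro s
    induction s using Finset.induction_on with
    | empty =>
      intro c d _ h
      have : c = d := funext fun i => h i (Finset.notMem_empty i)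
      rw [this]
    | insert _ _ hk IH =>
      rename_i k s
      intro c d hle hout
      have h1 : η c ≤ η (Function.update c k (d k)) := by
        have := (hbox k c (c k) (d k)).1 (hle k)
        rwa [Function.update_eq_self] at this
      refine h1.trans (IH _ _ ?_ ?_)
      · intro i
        rcases eq_or_ne i k with rfl | hik
        · simp
        · simp [Function.update_of_ne hik]
          exact hle i
      · intro i his
        rcases eq_or_ne i k with rfl | hik
        · simp
        · rw [Function.update_of_ne hik]
          exact hout i (by simp [hik, his])
  intro c d h
  exact aux Finset.univ c d h (by simp)

theorem coords_comparable (hP : UpwardsLinear P) (hQ : ∀ i, UpwardsLinear (Q i))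
    (hconn : ∀ i, ConnectedOrder (Q i)) (hbox : IsBoxAugmentation P Q η) :
    ∀ (N : ℕ) (c d : ∀ i, Q i),
      (Finset.univ.filter (fun i => c i ≠ d i)).card ≤ N →
      (η c ≤ η d ∨ η d ≤ η c) → ∀ k, c k ≤ d k ∨ d k ≤ c k := by
  classical
  intro N
  induction N with
  | zero =>
    intro c d hcard _ k
    left
    have : c k = d k := by
      by_contra hck
      have : k ∈ Finset.univ.filter (fun i => c i ≠ d i) := by simp [hck]
      have := Finset.card_pos.2 ⟨k, this⟩
      omega
    exact le_of_eq this
  | succ N IH =>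
    -- core asymmetric argument
    have core : ∀ c d : ∀ i, Q i,
        (Finset.univ.filter (fun i => c i ≠ d i)).card ≤ N + 1 →
        η c ≤ η d → ∀ k, c k ≤ d k ∨ d k ≤ c k := by
      intro c d hcard h k
      by_cases hck : c k = d k
      · exact Or.inl (le_of_eq hck)
      have hcd : η c < η d :=
        lt_of_le_of_ne h fun he => hck (congrFun (η.injective he) k)
      obtain ⟨z, hcz, hdz⟩ := directed_of_connected (hQ k) (hconn k) (c k) (d k)
      by_cases hzc : z = c k
      · exact Or.inr (hzc ▸ hdz)
      set c' := Function.update c k z with hc'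
      set d' := Function.update d k z with hd'
      have h1 : η c ≤ η c' := by
        have := (hbox k c (c k) z).1 hcz
        rwa [Function.update_eq_self] at this
      have h2 : η d ≤ η d' := by
        have := (hbox k d (d k) z).1 hdz
        rwa [Function.update_eq_self] at this
      have hcc' : η c < η c' := by
        refine lt_of_le_of_ne h1 fun he => hzc ?_
        have := η.injective he
        have := congrFun this k
        rw [hc'] at this
        simpa using this.symm
      have hcomp' : η c' ≤ η d' ∨ η d' ≤ η c' :=
        hP (η c) (η c') (η d') hcc' (lt_of_lt_of_le hcd h2)
      have hcard' : (Finset.univ.filter (fun i => c' i ≠ d' i)).card ≤ N := by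
        have hsub : Finset.univ.filter (fun i => c' i ≠ d' i) ⊆
            (Finset.univ.filter (fun i => c i ≠ d i)).erase k := by
          intro i hi
          simp only [Finset.mem_filter, Finset.mem_univ, true_and] at hi
          rcases eq_or_ne i k with rfl | hik
          · exfalso
            apply hi
            rw [hc', hd']
            simp
          · rw [Finset.mem_erase]
            refine ⟨hik, ?_⟩
            simp only [Finset.mem_filter, Finset.mem_univ, true_and]
            rwa [hc', hd', Function.update_of_ne hik, Function.update_of_ne hik] at hi
        have hkmem : k ∈ Finset.univ.filter (fun i => c i ≠ d i) := by simp [hck]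
        calc (Finset.univ.filter (fun i => c' i ≠ d' i)).card
            ≤ ((Finset.univ.filter (fun i => c i ≠ d i)).erase k).card :=
              Finset.card_le_card hsub
          _ = (Finset.univ.filter (fun i => c i ≠ d i)).card - 1 :=
              Finset.card_erase_of_mem hkmem
          _ ≤ N := by omega
      have hcomps : ∀ i, i ≠ k → (c i ≤ d i ∨ d i ≤ c i) := by
        intro i hik
        have := IH c' d' hcard' hcomp' i
        rwa [hc', hd', Function.update_of_ne hik, Function.update_of_ne hik] at this
      set base : ∀ i, Q i := fun i => if c i ≤ d i then d i else c i with hbase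
      set E := Function.update base k z with hE
      have hE1 : ∀ i, c i ≤ Function.update E k (c k) i := by
        intro i
        rcases eq_or_ne i k with rfl | hik
        · simp
        · rw [Function.update_of_ne hik, hE, Function.update_of_ne hik, hbase]
          by_cases hcle : c i ≤ d i
          · simpa [hcle] using hcle
          · simp [hcle]
      have hE2 : ∀ i, d i ≤ Function.update E k (d k) i := by
        intro i
        rcases eq_or_ne i k with rfl | hik
        · simp
        · rw [Function.update_of_ne hik, hE, Function.update_of_ne hik, hbase]
          by_cases hcle : c i ≤ d i
          · simp [hcle]
          · simp only [if_neg hcle]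
            rcases hcomps i hik with h' | h'
            · exact absurd h' hcle
            · exact h'
      have hηE1 : η c ≤ η (Function.update E k (c k)) := eta_mono hbox _ _ hE1
      have hηE2 : η d ≤ η (Function.update E k (d k)) := eta_mono hbox _ _ hE2
      have hcompE : η (Function.update E k (c k)) ≤ η (Function.update E k (d k)) ∨
          η (Function.update E k (d k)) ≤ η (Function.update E k (c k)) := by
        rcases eq_or_lt_of_le hηE1 with he | hlt
        · refine Or.inl ?_
          rw [← he]
          exact hcd.le.trans hηE2
        · exact hP (η c) _ _ hlt (lt_of_lt_of_le hcd hηE2)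
      rcases hcompE with hle' | hle'
      · exact Or.inl ((hbox k E (c k) (d k)).2 hle')
      · exact Or.inr ((hbox k E (d k) (c k)).2 hle')
    intro c d hcard hcomp k
    rcases hcomp with h | h
    · exact core c d hcard h k
    · have hcard2 : (Finset.univ.filter (fun i => d i ≠ c i)).card ≤ N + 1 := by
        have : (Finset.univ.filter (fun i => d i ≠ c i)) =
            (Finset.univ.filter (fun i => c i ≠ d i)) := by
          apply Finset.filter_congr
          intro i _
          simp [ne_comm]
        rwa [this]
      exact (core d c hcard2 h k).symm

end Box
end BoxAux

namespace BoxAux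

section Comp

variable {X : Type u} [PartialOrder X]

theorem upwardsLinear_subtype (hUL : UpwardsLinear X) (S : Set X) : UpwardsLinear ↥S := by
  rintro ⟨p, hp⟩ ⟨x, hx⟩ ⟨y, hy⟩ h1 h2
  have := hUL p x y (by exact_mod_cast h1) (by exact_mod_cast h2)
  exact_mod_cast this

/-- connected component of `x` inside `S`. -/
def compSet (S : Set X) (x : X) : Set X :=
  {y | Relation.ReflTransGen (fun a b => a ∈ S ∧ b ∈ S ∧ (a ≤ b ∨ b ≤ a)) x y}

theorem compSet_self {S : Set X} {x : X} : x ∈ compSet S x := Relation.ReflTransGen.refl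

theorem compSet_subset {S : Set X} {x : X} (hx : x ∈ S) : compSet S x ⊆ S := by
  intro y hy
  induction hy with
  | refl => exact hx
  | tail _ h IH => exact h.2.1

theorem compSet_closed {S : Set X} {x y z : X} (hy : y ∈ compSet S x) (hyS : y ∈ S)
    (hz : z ∈ S) (hcomp : y ≤ z ∨ z ≤ y) : z ∈ compSet S x :=
  Relation.ReflTransGen.tail hy ⟨hyS, hz, hcomp⟩

theorem compSet_connected {S : Set X} {x : X} (hx : x ∈ S) :
    ConnectedOrder ↥(compSet S x) := by
  classical
  have key : ∀ y z : X,
      Relation.ReflTransGen (fun a b => a ∈ S ∧ b ∈ S ∧ (a ≤ b ∨ b ≤ a)) y z →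
      ∀ (hy : y ∈ compSet S x), ∃ hz : z ∈ compSet S x,
        Relation.ReflTransGen (fun a b : ↥(compSet S x) => a ≤ b ∨ b ≤ a) ⟨y, hy⟩ ⟨z, hz⟩ := by
    intro y z h
    induction h with
    | refl => intro hy; exact ⟨hy, Relation.ReflTransGen.refl⟩
    | tail hab hbc IH =>
      intro hy
      obtain ⟨hb, hpath⟩ := IH hy
      have hc : _ ∈ compSet S x := compSet_closed hb hbc.1 hbc.2.1 hbc.2.2
      refine ⟨hc, hpath.tail ?_⟩
      rcases hbc.2.2 with h | h
      · exact Or.inl (by exact_mod_cast h)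
      · exact Or.inr (by exact_mod_cast h)
  have hsymm : Symmetric (fun a b : X => a ∈ S ∧ b ∈ S ∧ (a ≤ b ∨ b ≤ a)) := by
    rintro a b ⟨h1, h2, h3⟩
    exact ⟨h2, h1, h3.symm⟩
  rintro ⟨y, hy⟩ ⟨z, hz⟩
  -- path from y to x, then x to z
  have hxy : Relation.ReflTransGen (fun a b => a ∈ S ∧ b ∈ S ∧ (a ≤ b ∨ b ≤ a)) y x :=
    (@Relation.ReflTransGen.stdSymm _ _ ⟨fun _ _ h => hsymm h⟩).symm _ _ hy
  have hyz := hxy.trans hz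
  obtain ⟨hz', hpath⟩ := key y z hyz hy
  have : hz' = hz := rfl
  exact hpath

theorem connected_univ (hC : ConnectedOrder X) : ConnectedOrder ↥(Set.univ : Set X) := by
  have key : ∀ a b : X, Relation.ReflTransGen (fun a b : X => a ≤ b ∨ b ≤ a) a b →
      Relation.ReflTransGen (fun a b : ↥(Set.univ : Set X) => a ≤ b ∨ b ≤ a)
        ⟨a, trivial⟩ ⟨b, trivial⟩ := by
    intro a b h
    induction h with
    | refl => exact Relation.ReflTransGen.refl
    | tail hab hbc IH =>
      refine IH.tail ?_
      rcases hbc with h | h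
      · exact Or.inl (by exact_mod_cast h)
      · exact Or.inr (by exact_mod_cast h)
  rintro ⟨x, hx⟩ ⟨y, hy⟩
  exact key x y (hC x y)

theorem cone_connected (hUL : UpwardsLinear X) (d : X) :
    ConnectedOrder ↥{x | d ≤ x} := by
  rintro ⟨x, hx⟩ ⟨y, hy⟩
  have hcomp : x ≤ y ∨ y ≤ x := by
    rcases eq_or_lt_of_le (hx : d ≤ x) with rfl | hx'
    · exact Or.inl hy
    · rcases eq_or_lt_of_le (hy : d ≤ y) with rfl | hy'
      · exact Or.inr hx'.le
      · exact hUL d x y hx' hy'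
  refine Relation.ReflTransGen.single ?_
  rcases hcomp with h | h
  · exact Or.inl (by exact_mod_cast h)
  · exact Or.inr (by exact_mod_cast h)

end Comp

theorem srank_empty {X : Type u} [PartialOrder X] [WellFoundedLT X] :
    srank (∅ : Set X) = 0 := by
  refine le_antisymm ?_ (Ordinal.zero_le _)
  refine srank_le ?_
  rintro ⟨x, hx⟩
  exact absurd hx (Set.notMem_empty x)

section BoxSub

variable {n : ℕ} {P : Type u} [PartialOrder P]
  {Q : Fin n → Type u} [∀ i, PartialOrder (Q i)]
  (η : (∀ i, Q i) ≃ P)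

/-- The sub-box determined by a family of subsets. -/
def boxSet (T : ∀ i, Set (Q i)) : Set P := {p | ∀ i, η.symm p i ∈ T i}

/-- The bijection for a sub-box. -/
def boxEquiv (T : ∀ i, Set (Q i)) : (∀ i, ↥(T i)) ≃ ↥(boxSet η T) where
  toFun d := ⟨η fun i => (d i).1, by
    intro i
    rw [Equiv.symm_apply_apply]
    exact (d i).2⟩
  invFun p := fun i => ⟨η.symm p.1 i, p.2 i⟩
  left_inv d := by
    funext i
    apply Subtype.ext
    simp
  right_inv p := by
    apply Subtype.ext
    simp

theorem boxEquiv_box (hbox : IsBoxAugmentation P Q η) (T : ∀ i, Set (Q i)) :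
    IsBoxAugmentation ↥(boxSet η T) (fun i => ↥(T i)) (boxEquiv η T) := by
  intro k d e e'
  have hup : ∀ e : ↥(T k), (fun i => ((Function.update d k e) i).1) =
      Function.update (fun i => (d i).1) k e.1 := by
    intro e
    funext i
    rcases eq_or_ne i k with rfl | hik
    · simp
    · simp [Function.update_of_ne hik]
  constructor
  · intro h
    show (boxEquiv η T (Function.update d k e)).1 ≤ (boxEquiv η T (Function.update d k e')).1
    show η _ ≤ η _
    rw [hup e, hup e']
    exact (hbox k (fun i => (d i).1) e.1 e'.1).1 (by exact_mod_cast h)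
  · intro h
    have h' : η (Function.update (fun i => (d i).1) k e.1) ≤
        η (Function.update (fun i => (d i).1) k e'.1) := by
      rw [← hup e, ← hup e']
      exact h
    have := (hbox k (fun i => (d i).1) e.1 e'.1).2 h'
    exact_mod_cast this

end BoxSub
end BoxAux

namespace BoxAux

/-- foldr natural product over `List.ofFn`. -/
noncomputable def nprod {n : ℕ} (f : Fin n → Ordinal.{u}) : Ordinal.{u} :=
  (List.ofFn f).foldr (· ⨳ ·) 1

theorem nprod_zero (f : Fin 0 → Ordinal) : nprod f = 1 := by
  simp [nprod]

theorem nprod_succ {n : ℕ} (f : Fin (n+1) → Ordinal) :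
    nprod f = f 0 ⨳ nprod (fun i => f i.succ) := by
  rw [nprod, List.ofFn_succ]
  rfl

theorem nprod_mono {n : ℕ} {f g : Fin n → Ordinal} (h : ∀ i, f i ≤ g i) :
    nprod f ≤ nprod g := by
  induction n with
  | zero => simp [nprod_zero]
  | succ n IH =>
    rw [nprod_succ f, nprod_succ g]
    calc f 0 ⨳ nprod (fun i => f i.succ) ≤ g 0 ⨳ nprod (fun i => f i.succ) :=
          nmul_le_nmul_right (h 0) _
      _ ≤ g 0 ⨳ nprod (fun i => g i.succ) :=
          nmul_le_nmul_left (IH (fun i => h i.succ)) _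

theorem nmul_pos {a b : Ordinal} (ha : 0 < a) (hb : 0 < b) : 0 < a ⨳ b := by
  have h1 : (1:Ordinal) ≤ a := one_le_iff_pos.2 ha
  have h2 : (1:Ordinal) ≤ b := one_le_iff_pos.2 hb
  calc (0:Ordinal) < 1 := zero_lt_one
    _ = 1 ⨳ 1 := (nmul_one 1).symm
    _ ≤ a ⨳ b := (nmul_le_nmul_right h1 1).trans (nmul_le_nmul_left h2 a)

theorem nprod_pos {n : ℕ} {f : Fin n → Ordinal} (h : ∀ i, 0 < f i) : 0 < nprod f := by
  induction n with
  | zero => simp [nprod_zero]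
  | succ n IH =>
    rw [nprod_succ f]
    exact nmul_pos (h 0) (IH (fun i => h i.succ))

theorem nprod_strict {n : ℕ} {f g : Fin n → Ordinal} (h : ∀ i, f i ≤ g i)
    (i₀ : Fin n) (hi₀ : f i₀ < g i₀) (hg : ∀ i, 0 < g i) : nprod f < nprod g := by
  induction n with
  | zero => exact i₀.elim0
  | succ n IH =>
    rw [nprod_succ f, nprod_succ g]
    have hgpos : 0 < nprod (fun i => g i.succ) := nprod_pos (fun i => hg i.succ)
    rcases Fin.eq_zero_or_eq_succ i₀ with rfl | ⟨j, rfl⟩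
    · calc f 0 ⨳ nprod (fun i => f i.succ) ≤ f 0 ⨳ nprod (fun i => g i.succ) :=
            nmul_le_nmul_left (nprod_mono (fun i => h i.succ)) _
        _ < g 0 ⨳ nprod (fun i => g i.succ) := nmul_lt_nmul_of_pos_right hi₀ hgpos
    · rcases eq_or_lt_of_le (Ordinal.zero_le (f 0)) with hf0 | hf0
      · rw [← hf0, zero_nmul]
        exact nmul_pos (hg 0) (nprod_pos (fun i => hg i.succ))
      · calc f 0 ⨳ nprod (fun i => f i.succ) < f 0 ⨳ nprod (fun i => g i.succ) :=
              nmul_lt_nmul_of_pos_left (IH (fun i => h i.succ) j hi₀ (fun i => hg i.succ)) hf0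
          _ ≤ g 0 ⨳ nprod (fun i => g i.succ) := nmul_le_nmul_right (h 0) _

theorem nprod_update_nadd {n : ℕ} (f : Fin n → Ordinal) (i₀ : Fin n) (a b : Ordinal) :
    nprod (Function.update f i₀ a) ♯ nprod (Function.update f i₀ b) =
      nprod (Function.update f i₀ (a ♯ b)) := by
  classical
  induction n with
  | zero => exact i₀.elim0
  | succ n IH =>
    have tail_update : ∀ (c : Ordinal) (j : Fin n),
        (fun i : Fin n => Function.update f j.succ c i.succ) =
          Function.update (fun i : Fin n => f i.succ) j c := by
      intro c j
      funext i
      rcases eq_or_ne i j with rfl | hij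
      · simp
      · rw [Function.update_of_ne (fun h => hij (Fin.succ_injective n h)),
          Function.update_of_ne hij]
    rcases Fin.eq_zero_or_eq_succ i₀ with rfl | ⟨j, rfl⟩
    · have tail0 : ∀ c : Ordinal, (fun i : Fin n => Function.update f 0 c i.succ) =
          (fun i : Fin n => f i.succ) := by
        intro c
        funext i
        rw [Function.update_of_ne (Fin.succ_ne_zero i)]
      rw [nprod_succ, nprod_succ, nprod_succ, tail0, tail0, tail0]
      simp only [Function.update_self]
      rw [← nadd_nmul]
    · have head : ∀ c : Ordinal, Function.update f j.succ c 0 = f 0 := by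
        intro c
        rw [Function.update_of_ne (Fin.succ_ne_zero j).symm]
      rw [nprod_succ, nprod_succ, nprod_succ, head, head, head,
        tail_update, tail_update, tail_update, ← nmul_nadd, IH]

theorem nprod_opow {n : ℕ} (g : Fin n → Ordinal) :
    nprod (fun i => ω ^ g i) = ω ^ ((List.ofFn g).foldr (· ♯ ·) 0) := by
  induction n with
  | zero => simp [nprod_zero]
  | succ n IH =>
    rw [nprod_succ, IH, List.ofFn_succ, List.foldr_cons, opow_nmul_opow]

theorem foldr_nadd_eq_zero {l : List Ordinal} (h : l.foldr (· ♯ ·) 0 = 0) :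
    ∀ x ∈ l, x = 0 := by
  induction l with
  | nil => simp
  | cons a l IH =>
    rw [List.foldr_cons] at h
    have ha : a = 0 := by
      have := le_self_nadd (a := a) (b := l.foldr (· ♯ ·) 0)
      rw [h] at this
      exact le_antisymm this (Ordinal.zero_le a)
    have hl : l.foldr (· ♯ ·) 0 = 0 := by
      have := le_nadd_self (a := l.foldr (· ♯ ·) 0) (b := a)
      rw [h] at this
      exact le_antisymm this (Ordinal.zero_le _)
    intro x hx
    rcases List.mem_cons.1 hx with rfl | hx
    · exact ha
    · exact IH hl x hx

theorem srank_finite_union_lt {X : Type u} [PartialOrder X] [WellFoundedLT X]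
    {ι : Type*} [DecidableEq ι] (s : Finset ι) (F : ι → Set X) {μ : Ordinal}
    (hclosed : ∀ x y, x < μ → y < μ → x ♯ y < μ) (h0 : 0 < μ)
    (h : ∀ i ∈ s, srank (F i) < μ) :
    ∀ T : Set X, T ⊆ (⋃ i ∈ s, F i) → srank T < μ := by
  induction s using Finset.induction_on with
  | empty =>
    intro T hT
    have : T ⊆ (∅ : Set X) := by simpa using hT
    calc srank T ≤ srank (∅ : Set X) := srank_mono this
      _ = 0 := srank_empty
      _ < μ := h0
  | insert _ _ hk IH =>
    rename_i a s
    intro T hT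
    have hTeq : T = (T ∩ F a) ∪ (T ∩ ⋃ i ∈ s, F i) := by
      ext q
      constructor
      · intro hq
        have := hT hq
        simp only [Set.mem_iUnion, Finset.mem_insert, Set.mem_iUnion] at this
        obtain ⟨i, hi, hqi⟩ := this
        rcases hi with rfl | his
        · exact Or.inl ⟨hq, hqi⟩
        · exact Or.inr ⟨hq, Set.mem_biUnion his hqi⟩
      · rintro (⟨hq, _⟩ | ⟨hq, _⟩) <;> exact hq
    have h1 : srank (T ∩ F a) < μ :=
      lt_of_le_of_lt (srank_mono Set.inter_subset_right) (h a (Finset.mem_insert_self a s))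
    have h2 : srank (T ∩ ⋃ i ∈ s, F i) < μ :=
      IH (fun i hi => h i (Finset.mem_insert_of_mem hi)) _ Set.inter_subset_right
    calc srank T = srank ((T ∩ F a) ∪ (T ∩ ⋃ i ∈ s, F i)) := by rw [← hTeq]
      _ ≤ srank (T ∩ F a) ♯ srank (T ∩ ⋃ i ∈ s, F i) := srank_union_le _ _
      _ < μ := hclosed _ _ h1 h2

end BoxAux

namespace BoxAux

theorem one_le_ordRank {X : Type u} [PartialOrder X] [WellFoundedLT X] (x : X) :
    1 ≤ ordRank X := by
  calc (1:Ordinal) = 0 + 1 := (zero_add 1).symm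
    _ ≤ elRank x + 1 := add_le_add_left (Ordinal.zero_le _) 1
    _ ≤ ordRank X := elRank_add_one_le_ordRank x

theorem opow_decomp {α : Ordinal} (h1 : α ≠ 0) (h2 : ∀ g : Ordinal, α ≠ ω ^ g) :
    ∃ e ρ : Ordinal, ω ^ e < α ∧ ρ < α ∧ 0 < ρ ∧ ω ^ e + ρ = α ∧
      ω ^ e ♯ ρ = ω ^ e + ρ := by
  set e := log ω α with he
  have hle : ω ^ e ≤ α := opow_log_le_self ω h1
  have hlt : α < ω ^ succ e := lt_opow_succ_log_self one_lt_omega0 α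
  have hlt' : α < ω ^ e * ω := by rwa [opow_succ] at hlt
  set ρ := α - ω ^ e with hρ
  have hsum : ω ^ e + ρ = α := Ordinal.add_sub_cancel_of_le hle
  have hρ0 : 0 < ρ := by
    rcases eq_or_lt_of_le (Ordinal.zero_le ρ) with h | h
    · exfalso
      apply h2 e
      rw [← hsum, ← h, add_zero]
    · exact h
  have hρle : ρ ≤ α := by
    calc ρ ≤ ω ^ e + ρ := le_add_self
      _ = α := hsum
  have hρα : ρ < α := by
    rcases eq_or_lt_of_le hρle with h | h
    · exfalso
      have habs : ω ^ e + α = α := by rw [← h] at hsum ⊢; exact hsum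
      have hiter : ∀ m : ℕ, ω ^ e * m + α = α := by
        intro m
        induction m with
        | zero => simp
        | succ m IH =>
          push_cast
          rw [mul_add, mul_one, add_assoc, habs]
          push_cast at IH
          rw [IH]
      have : ω ^ e * ω ≤ α := by
        rw [mul_le_iff_of_isSuccLimit isSuccLimit_omega0]
        intro b hb
        obtain ⟨m, rfl⟩ := lt_omega0.1 hb
        calc ω ^ e * m ≤ ω ^ e * m + α := le_self_add
          _ = α := hiter m
      exact absurd hlt' (not_lt.2 this)
    · exact h
  have hωe : ω ^ e < α := lt_of_le_of_ne hle (fun h => h2 e h.symm)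
  exact ⟨e, ρ, hωe, hρα, hρ0, hsum, nadd_opow_eq_add (lt_of_le_of_lt hρle hlt')⟩

theorem main : ∀ (μ : Ordinal.{u}) (n : ℕ) (Q : Fin n → Type u) (P : Type u)
    [PartialOrder P] [WellFoundedLT P] [∀ i, PartialOrder (Q i)] [∀ i, WellFoundedLT (Q i)],
    UpwardsLinear P → (∀ i, UpwardsLinear (Q i)) → (∀ i, ConnectedOrder (Q i)) →
    ∀ (η : (∀ i, Q i) ≃ P), IsBoxAugmentation P Q η →
    nprod (fun i => ordRank (Q i)) = μ → ordRank P ≤ μ := by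
  intro μ
  induction μ using Ordinal.induction with
  | _ μ IH =>
  intro n Q P _ _ _ _ hP hQ hconn η hbox hμ
  by_cases hem : ∃ i, IsEmpty (Q i)
  · -- P is empty
    refine ordRank_le fun p => ?_
    obtain ⟨i, hi⟩ := hem
    exact (hi.false (η.symm p i)).elim
  push_neg at hem
  have hne : ∀ i, Nonempty (Q i) := fun i => hem i
  have hα1 : ∀ i, 1 ≤ ordRank (Q i) := fun i => one_le_ordRank (hne i).some
  have hαpos : ∀ i, 0 < ordRank (Q i) := fun i => lt_of_lt_of_le zero_lt_one (hα1 i)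
  -- generic sub-box bound from the induction hypothesis
  have IHbox : ∀ (T : ∀ i, Set (Q i)), (∀ i, ConnectedOrder ↥(T i)) →
      nprod (fun i => ordRank ↥(T i)) < μ →
      srank (boxSet η T) ≤ nprod (fun i => ordRank ↥(T i)) := by
    intro T hTconn hTlt
    exact IH _ hTlt n (fun i => ↥(T i)) (↥(boxSet η T))
      (upwardsLinear_subtype hP _) (fun i => upwardsLinear_subtype (hQ i) _) hTconn
      (boxEquiv η T) (boxEquiv_box η hbox T) rfl
  -- coordinatewise comparability of comparable elements
  have hcc : ∀ q q' : P, (q ≤ q' ∨ q' ≤ q) → ∀ k,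
      η.symm q k ≤ η.symm q' k ∨ η.symm q' k ≤ η.symm q k := by
    intro q q' hcomp k
    refine coords_comparable hP hQ hconn hbox
      ((Finset.univ.filter (fun i => η.symm q i ≠ η.symm q' i)).card)
      (η.symm q) (η.symm q') le_rfl ?_ k
    rcases hcomp with h | h
    · exact Or.inl (by rwa [Equiv.apply_symm_apply, Equiv.apply_symm_apply])
    · exact Or.inr (by rwa [Equiv.apply_symm_apply, Equiv.apply_symm_apply])
  -- generic cover-by-components bound
  have cover_bound : ∀ (A : ∀ i, Set (Q i)) (comps : Finset (Fin n)) (c : Fin n → Ordinal),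
      (∀ i, i ∉ comps → ConnectedOrder ↥(A i)) →
      (∀ i, srank (A i) ≤ c i) →
      (∀ f : Fin n → Ordinal, (∀ i, f i ≤ c i) → nprod f < μ) →
      srank (boxSet η A) ≤ nprod c := by
    intro A comps c hconnA hcA hstrict
    refine srank_cover_le
      (fun q : ↥(boxSet η A) =>
        boxSet η (fun i => if i ∈ comps then compSet (A i) (η.symm q.1 i) else A i))
      (nprod c) ?_ ?_ ?_ ?_
    · -- hsub
      rintro ⟨q, hq⟩ p' hp'
      intro i
      have h := hp' i
      by_cases his : i ∈ comps
      · simp only [if_pos his] at h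
        exact compSet_subset (hq i) h
      · simp only [if_neg his] at h
        exact h
    · -- hcover
      intro p' hp'
      refine ⟨⟨p', hp'⟩, ?_⟩
      intro i
      show η.symm p' i ∈ (if i ∈ comps then _ else _)
      by_cases his : i ∈ comps
      · simp only [if_pos his]
        exact compSet_self
      · simp only [if_neg his]
        exact hp' i
    · -- hclosed
      rintro ⟨q, hq⟩ p' hp' p'' hp'' hcomp
      intro i
      have hcompi := hcc p'' p' hcomp i
      show η.symm p'' i ∈ (if i ∈ comps then _ else _)
      by_cases his : i ∈ comps
      · simp only [if_pos his]
        have h1 := hp' i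
        simp only [if_pos his] at h1
        exact compSet_closed h1 (compSet_subset (hq i) h1) (hp'' i) hcompi.symm
      · simp only [if_neg his]
        exact hp'' i
    · -- hle
      rintro ⟨q, hq⟩
      set T : ∀ i, Set (Q i) :=
        fun i => if i ∈ comps then compSet (A i) (η.symm q i) else A i with hT
      have hfle : ∀ i, ordRank ↥(T i) ≤ c i := by
        intro i
        by_cases his : i ∈ comps
        · calc ordRank ↥(T i) = srank (T i) := rfl
            _ ≤ srank (A i) := by
                rw [hT]
                simp only [if_pos his]
                exact srank_mono (compSet_subset (hq i))
            _ ≤ c i := hcA i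
        · calc ordRank ↥(T i) = srank (T i) := rfl
            _ ≤ srank (A i) := by rw [hT]; simp only [if_neg his]; exact le_rfl
            _ ≤ c i := hcA i
      have hTconn : ∀ i, ConnectedOrder ↥(T i) := by
        intro i
        by_cases his : i ∈ comps
        · have hTi : T i = compSet (A i) (η.symm q i) := by rw [hT]; simp [his]
          rw [hTi]
          exact compSet_connected (hq i)
        · have hTi : T i = A i := by rw [hT]; simp [his]
          rw [hTi]
          exact hconnA i his
      calc srank (boxSet η T) ≤ nprod (fun i => ordRank ↥(T i)) :=
            IHbox T hTconn (hstrict _ hfle)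
        _ ≤ nprod c := nprod_mono hfle
  by_cases hpow : ∀ i, ∃ g : Ordinal.{u}, ordRank (Q i) = ω ^ g
  · -- CASE A : all factor ranks are ω-powers
    choose g hg using hpow
    have hμpow : μ = ω ^ ((List.ofFn g).foldr (· ♯ ·) 0) := by
      rw [← hμ]
      rw [show (fun i => ordRank (Q i)) = fun i => ω ^ g i from funext fun i => hg i]
      exact nprod_opow g
    have hclosed : ∀ x y, x < μ → y < μ → x ♯ y < μ := by
      intro x y hx hy
      rw [hμpow] at hx hy ⊢
      exact nadd_lt_opow _ x y hx hy
    have hμ0 : 0 < μ := by rw [hμpow]; exact opow_pos _ omega0_pos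
    refine ordRank_le fun p => ?_
    rw [add_one_eq_succ, succ_le_iff]
    set d := η.symm p with hd
    set As : Finset (Fin n) → ∀ i, Set (Q i) :=
      fun s i => if i ∈ s then {x | x < d i} else {x | d i ≤ x} with hAs
    have piece_lt : ∀ s : Finset (Fin n), s.Nonempty → srank (boxSet η (As s)) < μ := by
      intro s hs
      set c : Fin n → Ordinal :=
        fun i => if i ∈ s then elRank (d i) else ordRank (Q i) with hc
      have hcα : ∀ i, c i ≤ ordRank (Q i) := by
        intro i
        rw [hc]
        by_cases his : i ∈ s
        · simp only [if_pos his]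
          have := elRank_add_one_le_ordRank (d i)
          rw [add_one_eq_succ, succ_le_iff] at this
          exact this.le
        · simp only [if_neg his]
          exact le_rfl
      obtain ⟨i₀, hi₀⟩ := hs
      have hstrict : ∀ f : Fin n → Ordinal, (∀ i, f i ≤ c i) → nprod f < μ := by
        intro f hf
        rw [← hμ]
        refine nprod_strict (fun i => (hf i).trans (hcα i)) i₀ ?_ hαpos
        calc f i₀ ≤ c i₀ := hf i₀
          _ = elRank (d i₀) := by rw [hc]; simp only [if_pos hi₀]
          _ < ordRank (Q i₀) := by
              have := elRank_add_one_le_ordRank (d i₀)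
              rwa [add_one_eq_succ, succ_le_iff] at this
      have hbound := cover_bound (As s) s c ?_ ?_ hstrict
      · exact lt_of_le_of_lt hbound (hstrict c fun i => le_rfl)
      · intro i his
        have hAi : As s i = {x | d i ≤ x} := by rw [hAs]; simp [his]
        rw [hAi]
        exact cone_connected (hQ i) (d i)
      · intro i
        rw [hAs, hc]
        by_cases his : i ∈ s
        · simp only [if_pos his]
          exact le_of_eq (elRank_eq_srank_lt (d i)).symm
        · simp only [if_neg his]
          calc srank {x | d i ≤ x} ≤ srank (Set.univ : Set (Q i)) :=
                srank_mono (Set.subset_univ _)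
            _ = ordRank (Q i) := (ordRank_eq_srank_univ).symm
    -- covering of the strict lower set of p
    have hcover : {q : P | q < p} ⊆
        ⋃ s ∈ (Finset.univ.powerset.erase (∅ : Finset (Fin n))), boxSet η (As s) := by
      intro q hq
      have hcompq := hcc q p (Or.inl hq.le)
      set s : Finset (Fin n) := Finset.univ.filter (fun i => η.symm q i < d i) with hs
      have hsne : s ≠ ∅ := by
        intro hse
        have hge : ∀ i, d i ≤ η.symm q i := by
          intro i
          rcases hcompq i with h | h
          · rcases eq_or_lt_of_le h with h' | h'
            · exact le_of_eq h'.symm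
            · exfalso
              have : i ∈ s := by rw [hs]; simp [h', hd]
              rw [hse] at this
              exact absurd this (Finset.notMem_empty i)
          · exact h
        have : p ≤ q := by
          have := eta_mono hbox d (η.symm q) hge
          rwa [hd, Equiv.apply_symm_apply, Equiv.apply_symm_apply] at this
        exact (lt_irrefl p (lt_of_le_of_lt this hq)).elim
      have hmem : s ∈ Finset.univ.powerset.erase (∅ : Finset (Fin n)) := by
        rw [Finset.mem_erase]
        exact ⟨hsne, Finset.mem_powerset.2 (Finset.subset_univ s)⟩
      have hin : q ∈ boxSet η (As s) := by
        intro i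
        show η.symm q i ∈ (if i ∈ s then {x | x < d i} else {x | d i ≤ x})
        by_cases his : i ∈ s
        · rw [if_pos his]
          rw [hs] at his
          simp only [Finset.mem_filter, Finset.mem_univ, true_and] at his
          exact his
        · rw [if_neg his]
          rw [hs] at his
          simp only [Finset.mem_filter, Finset.mem_univ, true_and, not_lt] at his
          rcases hcompq i with h | h
          · rcases eq_or_lt_of_le h with h' | h'
            · exact le_of_eq h'.symm
            · exact absurd h' his
          · exact h
      exact Set.mem_biUnion hmem hin
    have := srank_finite_union_lt (Finset.univ.powerset.erase (∅ : Finset (Fin n)))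
      (fun s => boxSet η (As s)) hclosed hμ0
      (fun s hsmem => piece_lt s (Finset.nonempty_iff_ne_empty.2 (Finset.mem_erase.1 hsmem).1))
      {q : P | q < p} hcover
    calc elRank p = srank {q : P | q < p} := elRank_eq_srank_lt p
      _ < μ := this
  · -- CASE B : some factor rank is decomposable
    push_neg at hpow
    obtain ⟨i₀, hi₀⟩ := hpow
    obtain ⟨e, ρ, hωe, hρα, hρ0, hsum, haddeq⟩ :=
      opow_decomp (by exact (hαpos i₀).ne') hi₀
    set Dset : ∀ i, Set (Q i) := fun i => {x | elRank x < ω ^ e} with hDset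
    set Uset : ∀ i, Set (Q i) := fun i => {x | ω ^ e ≤ elRank x} with hUset
    have hD : srank (Dset i₀) ≤ ω ^ e := by
      refine srank_le ?_
      rintro ⟨x, hx⟩
      rw [add_one_eq_succ, succ_le_iff]
      exact lt_of_le_of_lt (elRank_subtype_le x hx) hx
    have hU : srank (Uset i₀) ≤ ρ := by
      have hsub : ∀ x (hx : x ∈ Uset i₀), elRank (⟨x, hx⟩ : ↥(Uset i₀)) ≤ elRank x - ω ^ e := by
        intro x
        induction x using WellFoundedLT.induction with
        | _ x IHx =>
        intro hx
        refine elRank_le ?_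
        rintro ⟨y, hy⟩ hlt
        rw [Subtype.mk_lt_mk] at hlt
        calc elRank (⟨y, hy⟩ : ↥(Uset i₀)) ≤ elRank y - ω ^ e := IHx y hlt hy
          _ < elRank x - ω ^ e := by
              rw [lt_sub, Ordinal.add_sub_cancel_of_le hy]
              exact elRank_lt_of_lt hlt
      refine srank_le ?_
      rintro ⟨x, hx⟩
      rw [add_one_eq_succ, succ_le_iff]
      calc elRank (⟨x, hx⟩ : ↥(Uset i₀)) ≤ elRank x - ω ^ e := hsub x hx
        _ < ρ := by
            refine sub_lt_of_lt_add ?_ hρ0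
            rw [hsum]
            have := elRank_add_one_le_ordRank x
            rwa [add_one_eq_succ, succ_le_iff] at this
    -- the two half-boxes
    have half_bound : ∀ (W : ∀ i, Set (Q i)) (w : Ordinal), srank (W i₀) ≤ w →
        w < ordRank (Q i₀) →
        srank (boxSet η (fun i => if i = i₀ then W i else Set.univ)) ≤
          nprod (Function.update (fun i => ordRank (Q i)) i₀ w) := by
      intro W w hWw hwα
      set c : Fin n → Ordinal := Function.update (fun i => ordRank (Q i)) i₀ w with hcdef
      have hcα : ∀ i, c i ≤ ordRank (Q i) := by
        intro i
        rw [hcdef]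
        rcases eq_or_ne i i₀ with rfl | hne
        · rw [Function.update_self]; exact hwα.le
        · rw [Function.update_of_ne hne]
      have hstrict : ∀ f : Fin n → Ordinal, (∀ i, f i ≤ c i) → nprod f < μ := by
        intro f hf
        rw [← hμ]
        refine nprod_strict (fun i => (hf i).trans (hcα i)) i₀ ?_ hαpos
        calc f i₀ ≤ c i₀ := hf i₀
          _ = w := by rw [hcdef, Function.update_self]
          _ < ordRank (Q i₀) := hwα
      have := cover_bound (fun i => if i = i₀ then W i else Set.univ) {i₀} c
        ?_ ?_ hstrict
      · exact this
      · intro i his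
        have hne : i ≠ i₀ := by simpa using his
        show ConnectedOrder ↥((fun i => if i = i₀ then W i else (Set.univ : Set (Q i))) i)
        have hAi : (fun i => if i = i₀ then W i else (Set.univ : Set (Q i))) i =
            (Set.univ : Set (Q i)) := by simp [hne]
        rw [hAi]
        exact connected_univ (hconn i)
      · intro i
        rw [hcdef]
        rcases eq_or_ne i i₀ with rfl | hne
        · simp only [if_pos rfl, Function.update_self]
          exact hWw
        · simp only [if_neg hne, Function.update_of_ne hne]
          exact le_of_eq (ordRank_eq_srank_univ).symm
    have hPD := half_bound Dset (ω ^ e) hD hωe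
    have hPU := half_bound Uset ρ hU hρα
    have hcoverP : (Set.univ : Set P) ⊆
        boxSet η (fun i => if i = i₀ then Dset i else Set.univ) ∪
        boxSet η (fun i => if i = i₀ then Uset i else Set.univ) := by
      intro q _
      by_cases h : elRank (η.symm q i₀) < ω ^ e
      · left
        intro i
        rcases eq_or_ne i i₀ with rfl | hne
        · simp only [if_pos rfl, ↓reduceIte]
          exact h
        · simp only [if_neg hne]
          trivial
      · right
        intro i
        rcases eq_or_ne i i₀ with rfl | hne
        · simp only [if_pos rfl]
          exact not_lt.1 h
        · simp only [if_neg hne]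
          trivial
    calc ordRank P = srank (Set.univ : Set P) := ordRank_eq_srank_univ
      _ ≤ srank (boxSet η (fun i => if i = i₀ then Dset i else Set.univ) ∪
          boxSet η (fun i => if i = i₀ then Uset i else Set.univ)) := srank_mono hcoverP
      _ ≤ srank (boxSet η (fun i => if i = i₀ then Dset i else Set.univ)) ♯
          srank (boxSet η (fun i => if i = i₀ then Uset i else Set.univ)) := srank_union_le _ _
      _ ≤ nprod (Function.update (fun i => ordRank (Q i)) i₀ (ω ^ e)) ♯
          nprod (Function.update (fun i => ordRank (Q i)) i₀ ρ) := nadd_le_nadd hPD hPU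
      _ = nprod (Function.update (fun i => ordRank (Q i)) i₀ (ω ^ e ♯ ρ)) :=
          nprod_update_nadd _ _ _ _
      _ = nprod (fun i => ordRank (Q i)) := by
          rw [haddeq, hsum, Function.update_eq_self]
      _ = μ := hμ

end BoxAux


/-- If a wulpo `P` is a box-augmentation of connected wulpos `Q 0, …, Q (n-1)`, then
`rank P ≤ rank (Q 0) ⨳ ⋯ ⨳ rank (Q (n-1))`, where `⨳` is the natural (Hessenberg)
product. -/
theorem rank_boxAugmentation_connected {n : ℕ} {P : Type u} [PartialOrder P]
    [WellFoundedLT P] (Q : Fin n → Type u) [∀ i, PartialOrder (Q i)]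
    [∀ i, WellFoundedLT (Q i)] (hP : UpwardsLinear P) (hQ : ∀ i, UpwardsLinear (Q i))
    (hconn : ∀ i, ConnectedOrder (Q i))
    (η : (∀ i, Q i) ≃ P) (hbox : IsBoxAugmentation P Q η) :
    ordRank P ≤ (List.ofFn fun i => ordRank (Q i)).foldr (· ⨳ ·) 1 := by
  have h := BoxAux.main (BoxAux.nprod fun i => ordRank (Q i)) n Q P hP hQ hconn η hbox rfl
  simpa [BoxAux.nprod] using h
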